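/- arXiv:quant-ph/0105017 — 3 statements merged into one kernel-verified Lean document; each statement's English description precedes it below -/
import Mathlib

section
/- For all positive integers a and b with m = min(a, b), and every unit vector ψ in C^a ⊗ C^b, there exist nonnegative real numbers p_1, …, p_m summing to 1, an orthonormal family (a_i)_{i=1}^m in C^a, and an orthonormal family (b_i)_{i=1}^m in C^b, such that ψ = ∑_{i=1}^m √(p_i) · (a_i ⊗ b_i) (Schmidt decomposition). -/
open scoped BigOperators Classical ComplexOrder
open Matrix Kronecker Filter

noncomputable section

/-! ### Vectors and states -/

/-- The standard inner product on `ι → ℂ`. -/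
def cdot {ι : Type*} [Fintype ι] (u v : ι → ℂ) : ℂ := ∑ i, star (u i) * v i

/-- A unit vector. -/
def UnitVec {ι : Type*} [Fintype ι] (ψ : ι → ℂ) : Prop := cdot ψ ψ = 1

/-- An orthonormal family of vectors. -/
def OrthonormalFam {κ ι : Type*} [Fintype ι] (χ : κ → ι → ℂ) : Prop :=
  ∀ i j, cdot (χ i) (χ j) = if i = j then 1 else 0

/-- Tensor product of vectors in `C^a` and `C^b`. -/
def tensorVec {a b : ℕ} (u : Fin a → ℂ) (v : Fin b → ℂ) : Fin a × Fin b → ℂ :=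
  fun p => u p.1 * v p.2

/-- The rank-one operator `|ψ⟩⟨ψ|`. -/
def projVec {ι : Type*} (ψ : ι → ℂ) : Matrix ι ι ℂ :=
  Matrix.of fun p q => ψ p * star (ψ q)

/-- A (mixed) quantum state: a positive semidefinite matrix of trace one. -/
def IsState {ι : Type*} [Fintype ι] (ρ : Matrix ι ι ℂ) : Prop :=
  ρ.PosSemidef ∧ ρ.trace = 1

/-- A pure state: a rank-one projection `|ψ⟩⟨ψ|` onto a unit vector. -/
def IsPureState {ι : Type*} [Fintype ι] (ρ : Matrix ι ι ℂ) : Prop :=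
  ∃ ψ : ι → ℂ, UnitVec ψ ∧ ρ = projVec ψ

/-- A separable (disentangled) state: a finite convex combination of product states. -/
def IsSepState {a b : ℕ} (ρ : Matrix (Fin a × Fin b) (Fin a × Fin b) ℂ) : Prop :=
  ∃ (k : ℕ) (r : Fin k → ℝ) (ρA : Fin k → Matrix (Fin a) (Fin a) ℂ)
    (ρB : Fin k → Matrix (Fin b) (Fin b) ℂ),
    (∀ i, 0 ≤ r i) ∧ (∑ i, r i = 1) ∧
    (∀ i, (ρA i).PosSemidef ∧ (ρA i).trace = 1) ∧
    (∀ i, (ρB i).PosSemidef ∧ (ρB i).trace = 1) ∧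
    ρ = ∑ i, r i • (ρA i ⊗ₖ ρB i)

/-! ### Partial trace, Schmidt coefficients, reduced von Neumann entropy -/

/-- Partial trace over the second tensor factor. -/
def ptraceB {a b : ℕ} (ρ : Matrix (Fin a × Fin b) (Fin a × Fin b) ℂ) :
    Matrix (Fin a) (Fin a) ℂ :=
  Matrix.of fun i j => ∑ k : Fin b, ρ (i, k) (j, k)

theorem ptraceB_projVec_isHermitian {a b : ℕ} (ψ : Fin a × Fin b → ℂ) :
    (ptraceB (projVec ψ)).IsHermitian := by
  show (ptraceB (projVec ψ))ᴴ = ptraceB (projVec ψ)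
  ext i j
  simp only [Matrix.conjTranspose_apply, ptraceB, Matrix.of_apply, projVec, star_sum, star_mul',
    star_star]
  exact Finset.sum_congr rfl fun k _ => mul_comm _ _

/-- The Schmidt coefficients of a vector `ψ ∈ C^a ⊗ C^b`: the eigenvalues (with multiplicity)
of the partial trace over the second factor of `|ψ⟩⟨ψ|`. -/
def schmidtCoeffs {a b : ℕ} (ψ : Fin a × Fin b → ℂ) : Fin a → ℝ :=
  (ptraceB_projVec_isHermitian ψ).eigenvalues

/-- The reduced von Neumann entropy of the pure state `|ψ⟩⟨ψ|`. -/
def SvN {a b : ℕ} (ψ : Fin a × Fin b → ℂ) : ℝ :=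
  -∑ i, schmidtCoeffs ψ i * Real.logb 2 (schmidtCoeffs ψ i)

/-- The number of nonzero Schmidt coefficients. -/
def schmidtRank {a b : ℕ} (ψ : Fin a × Fin b → ℂ) : ℕ :=
  (Finset.univ.filter fun i => schmidtCoeffs ψ i ≠ 0).card

/-- The largest Schmidt coefficient. -/
def maxSchmidt {a b : ℕ} (ψ : Fin a × Fin b → ℂ) : ℝ := ⨆ i, schmidtCoeffs ψ i

/-- A representative of the maximally entangled state `P₊^d`: a pure state exactly `d` of whose
Schmidt coefficients are nonzero, all equal to `1/d`. -/
def IsMaxEntRep {a b : ℕ} (d : ℕ) (ρ : Matrix (Fin a × Fin b) (Fin a × Fin b) ℂ) : Prop :=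
  ∃ ψ : Fin a × Fin b → ℂ, UnitVec ψ ∧ ρ = projVec ψ ∧
    (∀ i, schmidtCoeffs ψ i = 0 ∨ schmidtCoeffs ψ i = 1 / d) ∧
    schmidtRank ψ = d

/-- The standard maximally entangled vector `Ψ₊ = (1/√d) ∑ᵢ eᵢ ⊗ eᵢ` on `C^d ⊗ C^d`. -/
def maxEntVec (d : ℕ) : Fin d × Fin d → ℂ :=
  fun p => if p.1 = p.2 then ((1 / Real.sqrt d : ℝ) : ℂ) else 0

/-! ### Trace norm -/

/-- The trace norm of a square complex matrix: the sum of its singular values. -/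
def traceNorm {ι : Type*} [Fintype ι] [DecidableEq ι] (A : Matrix ι ι ℂ) : ℝ :=
  ∑ i, Real.sqrt ((Matrix.posSemidef_conjTranspose_mul_self A).isHermitian.eigenvalues i)

/-! ### Kronecker products of bipartite states, with the canonical local reindexing -/

/-- The canonical regrouping of indices identifying `(C^a⊗C^b)⊗(C^c⊗C^d)` with
`C^{ac}⊗C^{bd}`. -/
def pairEquiv (a b c d : ℕ) : ((Fin a × Fin b) × Fin c × Fin d) ≃ Fin (a * c) × Fin (b * d) :=
  (Equiv.prodProdProdComm (Fin a) (Fin b) (Fin c) (Fin d)).trans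
    (Equiv.prodCongr finProdFinEquiv finProdFinEquiv)

/-- Kronecker product of two bipartite states, regarded (after the canonical local reindexing)
as a state on `C^{ac}⊗C^{bd}`. -/
def stateKron {a b c d : ℕ} (ρ : Matrix (Fin a × Fin b) (Fin a × Fin b) ℂ)
    (σ : Matrix (Fin c × Fin d) (Fin c × Fin d) ℂ) :
    Matrix (Fin (a * c) × Fin (b * d)) (Fin (a * c) × Fin (b * d)) ℂ :=
  Matrix.reindex (pairEquiv a b c d) (pairEquiv a b c d) (ρ ⊗ₖ σ)

/-- The `n`-fold Kronecker power `ρ^{⊗n}` of a bipartite state, regarded (after the canonical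
local reindexing grouping the `n` A-factors and the `n` B-factors) as a state on
`C^{a^n}⊗C^{b^n}`. -/
def statePow {a b : ℕ} (ρ : Matrix (Fin a × Fin b) (Fin a × Fin b) ℂ) :
    (n : ℕ) → Matrix (Fin (a ^ n) × Fin (b ^ n)) (Fin (a ^ n) × Fin (b ^ n)) ℂ
  | 0 => 1
  | n + 1 =>
      Matrix.reindex
        (Equiv.prodCongr (finCongr (pow_succ a n).symm) (finCongr (pow_succ b n).symm))
        (Equiv.prodCongr (finCongr (pow_succ a n).symm) (finCongr (pow_succ b n).symm))
        (stateKron (statePow ρ n) ρ)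

/-! ### LQCC operations -/

/-- The data of an LQCC protocol from `C^a⊗C^b` to `C^{a'}⊗C^{b'}`: `n ≥ 1` rounds; intermediate
local dimensions; at step `2k` Alice applies operators `V k`, at step `2k+1` Bob applies
operators `W k`, each labelled by a classical outcome and allowed to depend on all outcomes
obtained so far, and each family summing (over its own outcome) to the identity. -/
structure LQCCProtocol (a b a' b' : ℕ) where
  n : ℕ
  npos : 0 < n
  adim : ℕ → ℕ
  bdim : ℕ → ℕ
  ha0 : adim 0 = a
  hb0 : bdim 0 = b
  han : adim n = a'
  hbn : bdim n = b'
  /-- the number of classical outcomes at each of the `2n` steps -/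
  K : Fin (2 * n) → ℕ
  V : ∀ k : ℕ, (∀ s : Fin (2 * n), Fin (K s)) →
      Matrix (Fin (adim (k + 1))) (Fin (adim k)) ℂ
  W : ∀ k : ℕ, (∀ s : Fin (2 * n), Fin (K s)) →
      Matrix (Fin (bdim (k + 1))) (Fin (bdim k)) ℂ
  /-- Alice's round-`k` operator depends only on the outcomes of steps `≤ 2k`. -/
  hVdep : ∀ (k : ℕ) (i i' : ∀ s : Fin (2 * n), Fin (K s)),
      (∀ s : Fin (2 * n), (s : ℕ) ≤ 2 * k → i s = i' s) → V k i = V k i'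
  /-- Bob's round-`k` operator depends only on the outcomes of steps `≤ 2k+1`. -/
  hWdep : ∀ (k : ℕ) (i i' : ∀ s : Fin (2 * n), Fin (K s)),
      (∀ s : Fin (2 * n), (s : ℕ) ≤ 2 * k + 1 → i s = i' s) → W k i = W k i'
  hVnorm : ∀ (k : ℕ) (hk : k < n) (i : ∀ s : Fin (2 * n), Fin (K s)),
      ∑ j : Fin (K ⟨2 * k, by omega⟩),
        (V k (Function.update i ⟨2 * k, by omega⟩ j))ᴴ *
          V k (Function.update i ⟨2 * k, by omega⟩ j) = 1
  hWnorm : ∀ (k : ℕ) (hk : k < n) (i : ∀ s : Fin (2 * n), Fin (K s)),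
      ∑ j : Fin (K ⟨2 * k + 1, by omega⟩),
        (W k (Function.update i ⟨2 * k + 1, by omega⟩ j))ᴴ *
          W k (Function.update i ⟨2 * k + 1, by omega⟩ j) = 1

namespace LQCCProtocol

variable {a b a' b' : ℕ} (P : LQCCProtocol a b a' b')

/-- The type of full classical outcome histories of a protocol. -/
abbrev Hist : Type := ∀ s : Fin (2 * P.n), Fin (P.K s)

/-- The product `(1⊗W_{k-1})(V_{k-1}⊗1)⋯(1⊗W₀)(V₀⊗1)` of the first `k` rounds of operators,
for a given outcome history. -/
def partialOp (i : P.Hist) :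
    (k : ℕ) → Matrix (Fin (P.adim k) × Fin (P.bdim k)) (Fin (P.adim 0) × Fin (P.bdim 0)) ℂ
  | 0 => 1
  | k + 1 =>
      (((1 : Matrix (Fin (P.adim (k + 1))) (Fin (P.adim (k + 1))) ℂ) ⊗ₖ P.W k i) *
        (P.V k i ⊗ₖ (1 : Matrix (Fin (P.bdim k)) (Fin (P.bdim k)) ℂ))) *
        partialOp i k

/-- The total Kraus operator `V_{i₁…i_{2n}}` of a protocol for a given outcome history. -/
def totalOp (i : P.Hist) : Matrix (Fin a' × Fin b') (Fin a × Fin b) ℂ :=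
  Matrix.reindex (Equiv.prodCongr (finCongr P.han) (finCongr P.hbn))
    (Equiv.prodCongr (finCongr P.ha0) (finCongr P.hb0)) (P.partialOp i P.n)

end LQCCProtocol

/-- A map on matrices is an LQCC operation if it is implemented by some LQCC protocol:
`Λ(σ) = ∑ᵢ Vᵢ σ Vᵢᴴ` over all outcome histories `i`. -/
def IsLQCC {a b a' b' : ℕ}
    (Λ : Matrix (Fin a × Fin b) (Fin a × Fin b) ℂ →
      Matrix (Fin a' × Fin b') (Fin a' × Fin b') ℂ) : Prop :=
  ∃ P : LQCCProtocol a b a' b',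
    ∀ σ, Λ σ = ∑ i : P.Hist, P.totalOp i * σ * (P.totalOp i)ᴴ

/-! ### Entanglement measures and the standard conditions -/

/-- A family assigning a real number to every bipartite density matrix, for all dimensions. -/
def EntFun : Type :=
  ∀ (a b : ℕ), Matrix (Fin a × Fin b) (Fin a × Fin b) ℂ → ℝ

/-- Nonnegativity on (mixed) states. -/
def MixedNonneg (E : EntFun) : Prop :=
  ∀ (a b : ℕ) (ρ : Matrix (Fin a × Fin b) (Fin a × Fin b) ℂ), IsState ρ → 0 ≤ E a b ρ

/-- Nonnegativity on pure states. -/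
def PureNonneg (E : EntFun) : Prop :=
  ∀ (a b : ℕ) (ψ : Fin a × Fin b → ℂ), UnitVec ψ → 0 ≤ E a b (projVec ψ)

/-- Invariance under conjugation by local unitaries, on states. -/
def MixedLocalUnitaryInv (E : EntFun) : Prop :=
  ∀ (a b : ℕ) (ρ : Matrix (Fin a × Fin b) (Fin a × Fin b) ℂ), IsState ρ →
    ∀ (U : Matrix (Fin a) (Fin a) ℂ) (V : Matrix (Fin b) (Fin b) ℂ),
      U ∈ Matrix.unitaryGroup (Fin a) ℂ → V ∈ Matrix.unitaryGroup (Fin b) ℂ →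
      E a b ((U ⊗ₖ V) * ρ * (U ⊗ₖ V)ᴴ) = E a b ρ

/-- Invariance under conjugation by local unitaries, on pure states. -/
def PureLocalUnitaryInv (E : EntFun) : Prop :=
  ∀ (a b : ℕ) (ρ : Matrix (Fin a × Fin b) (Fin a × Fin b) ℂ), IsPureState ρ →
    ∀ (U : Matrix (Fin a) (Fin a) ℂ) (V : Matrix (Fin b) (Fin b) ℂ),
      U ∈ Matrix.unitaryGroup (Fin a) ℂ → V ∈ Matrix.unitaryGroup (Fin b) ℂ →
      E a b ((U ⊗ₖ V) * ρ * (U ⊗ₖ V)ᴴ) = E a b ρ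

/-- (E0): separable states have zero entanglement. -/
def CondE0 (E : EntFun) : Prop :=
  ∀ (a b : ℕ) (ρ : Matrix (Fin a × Fin b) (Fin a × Fin b) ℂ), IsState ρ → IsSepState ρ →
    E a b ρ = 0

/-- (E1)=(P1): normalization on representatives of the maximally entangled states. -/
def CondE1 (E : EntFun) : Prop :=
  ∀ (a b d : ℕ), 1 ≤ d → ∀ P : Matrix (Fin a × Fin b) (Fin a × Fin b) ℂ,
    IsMaxEntRep d P → E a b P = Real.logb 2 d

/-- (E2): monotonicity under LQCC operations. -/
def CondE2 (E : EntFun) : Prop :=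
  ∀ (a b a' b' : ℕ)
    (Λ : Matrix (Fin a × Fin b) (Fin a × Fin b) ℂ →
      Matrix (Fin a' × Fin b') (Fin a' × Fin b') ℂ)
    (σ : Matrix (Fin a × Fin b) (Fin a × Fin b) ℂ),
    IsState σ → IsLQCC Λ → E a' b' (Λ σ) ≤ E a b σ

/-- (E3): asymptotic continuity. -/
def CondE3 (E : EntFun) : Prop :=
  ∀ (A B : ℕ → ℕ) (ρ σ : ∀ n : ℕ, Matrix (Fin (A n) × Fin (B n)) (Fin (A n) × Fin (B n)) ℂ),
    (∀ n, IsState (ρ n)) → (∀ n, IsState (σ n)) →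
    Tendsto (fun n => traceNorm (ρ n - σ n)) atTop (nhds 0) →
    Tendsto (fun n =>
      (E (A n) (B n) (ρ n) - E (A n) (B n) (σ n)) / (1 + Real.logb 2 ((A n : ℝ) * (B n : ℝ))))
      atTop (nhds 0)

/-- (E3'): asymptotic continuity, where the first sequence consists of pure states. -/
def CondE3' (E : EntFun) : Prop :=
  ∀ (A B : ℕ → ℕ) (ρ σ : ∀ n : ℕ, Matrix (Fin (A n) × Fin (B n)) (Fin (A n) × Fin (B n)) ℂ),
    (∀ n, IsPureState (ρ n)) → (∀ n, IsState (σ n)) →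
    Tendsto (fun n => traceNorm (ρ n - σ n)) atTop (nhds 0) →
    Tendsto (fun n =>
      (E (A n) (B n) (ρ n) - E (A n) (B n) (σ n)) / (1 + Real.logb 2 ((A n : ℝ) * (B n : ℝ))))
      atTop (nhds 0)

/-- (E4): additivity. -/
def CondE4 (E : EntFun) : Prop :=
  ∀ (a b : ℕ) (ρ : Matrix (Fin a × Fin b) (Fin a × Fin b) ℂ), IsState ρ →
    ∀ n : ℕ, 1 ≤ n → E (a ^ n) (b ^ n) (statePow ρ n) = n * E a b ρ

/-- (E4'): asymptotic additivity. -/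
def CondE4' (E : EntFun) : Prop :=
  ∀ (a b : ℕ) (ρ : Matrix (Fin a × Fin b) (Fin a × Fin b) ℂ), IsState ρ →
    ∀ ε : ℝ, 0 < ε → ∃ N : ℕ, 0 < N ∧ ∀ n : ℕ, N ≤ n →
      E (a ^ n) (b ^ n) (statePow ρ n) / n - ε ≤ E a b ρ ∧
      E a b ρ ≤ E (a ^ n) (b ^ n) (statePow ρ n) / n + ε

/-- (E5): subadditivity. -/
def CondE5 (E : EntFun) : Prop :=
  ∀ (a b c d : ℕ) (ρ : Matrix (Fin a × Fin b) (Fin a × Fin b) ℂ)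
    (σ : Matrix (Fin c × Fin d) (Fin c × Fin d) ℂ), IsState ρ → IsState σ →
    E (a * c) (b * d) (stateKron ρ σ) ≤ E a b ρ + E c d σ

/-- (E5''): existence of the regularization. -/
def CondE5'' (E : EntFun) : Prop :=
  ∀ (a b : ℕ) (ρ : Matrix (Fin a × Fin b) (Fin a × Fin b) ℂ), IsState ρ →
    ∃ L : ℝ, Tendsto (fun n : ℕ => E (a ^ n) (b ^ n) (statePow ρ n) / n) atTop (nhds L)

/-- (E6): convexity. -/
def CondE6 (E : EntFun) : Prop :=
  ∀ (a b : ℕ) (ρ σ : Matrix (Fin a × Fin b) (Fin a × Fin b) ℂ), IsState ρ → IsState σ →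
    ∀ l : ℝ, 0 ≤ l → l ≤ 1 →
      E a b (l • ρ + (1 - l) • σ) ≤ l * E a b ρ + (1 - l) * E a b σ

/-- (E6'): convexity on finite decompositions into pure states. -/
def CondE6' (E : EntFun) : Prop :=
  ∀ (a b k : ℕ) (p : Fin k → ℝ) (ψ : Fin k → Fin a × Fin b → ℂ),
    (∀ i, 0 ≤ p i) → (∑ i, p i = 1) → (∀ i, UnitVec (ψ i)) →
    E a b (∑ i, p i • projVec (ψ i)) ≤ ∑ i, p i * E a b (projVec (ψ i))

/-- (P0): separable pure states have zero entanglement. -/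
def CondP0 (E : EntFun) : Prop :=
  ∀ (a b : ℕ) (ψA : Fin a → ℂ) (ψB : Fin b → ℂ), UnitVec (tensorVec ψA ψB) →
    E a b (projVec (tensorVec ψA ψB)) = 0

/-- (P1): normalization (same as (E1)). -/
def CondP1 (E : EntFun) : Prop := CondE1 E

/-- (P1'): `E(P₊(C²)) = 1`. -/
def CondP1' (E : EntFun) : Prop := E 2 2 (projVec (maxEntVec 2)) = 1

/-- (P2): monotonicity under LQCC operations mapping pure states to pure states. -/
def CondP2 (E : EntFun) : Prop :=
  ∀ (a b a' b' : ℕ)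
    (Λ : Matrix (Fin a × Fin b) (Fin a × Fin b) ℂ →
      Matrix (Fin a' × Fin b') (Fin a' × Fin b') ℂ)
    (σ : Matrix (Fin a × Fin b) (Fin a × Fin b) ℂ),
    IsPureState σ → IsLQCC Λ → IsPureState (Λ σ) → E a' b' (Λ σ) ≤ E a b σ

/-- (P3): asymptotic continuity on pure states. -/
def CondP3 (E : EntFun) : Prop :=
  ∀ (A B : ℕ → ℕ) (ρ σ : ∀ n : ℕ, Matrix (Fin (A n) × Fin (B n)) (Fin (A n) × Fin (B n)) ℂ),
    (∀ n, IsPureState (ρ n)) → (∀ n, IsPureState (σ n)) →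
    Tendsto (fun n => traceNorm (ρ n - σ n)) atTop (nhds 0) →
    Tendsto (fun n =>
      (E (A n) (B n) (ρ n) - E (A n) (B n) (σ n)) / (1 + Real.logb 2 ((A n : ℝ) * (B n : ℝ))))
      atTop (nhds 0)

/-- (P4): additivity on pure states. -/
def CondP4 (E : EntFun) : Prop :=
  ∀ (a b : ℕ) (ψ : Fin a × Fin b → ℂ), UnitVec ψ →
    ∀ n : ℕ, 1 ≤ n →
      E (a ^ n) (b ^ n) (statePow (projVec ψ) n) = n * E a b (projVec ψ)

/-- (P4'): asymptotic additivity on pure states. -/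
def CondP4' (E : EntFun) : Prop :=
  ∀ (a b : ℕ) (ψ : Fin a × Fin b → ℂ), UnitVec ψ →
    ∀ ε : ℝ, 0 < ε → ∃ N : ℕ, 0 < N ∧ ∀ n : ℕ, N ≤ n →
      E (a ^ n) (b ^ n) (statePow (projVec ψ) n) / n - ε ≤ E a b (projVec ψ) ∧
      E a b (projVec ψ) ≤ E (a ^ n) (b ^ n) (statePow (projVec ψ) n) / n + ε

/-! ### Entanglement of distillation and entanglement cost -/

/-- The distillable entanglement `E_D`. -/
def ED {a b : ℕ} (ρ : Matrix (Fin a × Fin b) (Fin a × Fin b) ℂ) : ℝ :=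
  sSup {r : ℝ |
    ∃ (d : ℕ → ℕ)
      (Λ : ∀ n : ℕ, Matrix (Fin (a ^ n) × Fin (b ^ n)) (Fin (a ^ n) × Fin (b ^ n)) ℂ →
        Matrix (Fin (a ^ n) × Fin (b ^ n)) (Fin (a ^ n) × Fin (b ^ n)) ℂ)
      (P : ∀ n : ℕ, Matrix (Fin (a ^ n) × Fin (b ^ n)) (Fin (a ^ n) × Fin (b ^ n)) ℂ),
      (∀ n, 0 < d n) ∧ (∀ n, IsLQCC (Λ n)) ∧ (∀ n, IsMaxEntRep (d n) (P n)) ∧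
      Tendsto (fun n => traceNorm (P n - Λ n (statePow ρ n))) atTop (nhds 0) ∧
      r = Filter.limsup (fun n : ℕ => Real.logb 2 (d n) / n) atTop}

/-- The entanglement cost `E_C`. -/
def EC {a b : ℕ} (ρ : Matrix (Fin a × Fin b) (Fin a × Fin b) ℂ) : ℝ :=
  sInf {r : ℝ |
    ∃ (d : ℕ → ℕ)
      (Λ : ∀ n : ℕ, Matrix (Fin (d n) × Fin (d n)) (Fin (d n) × Fin (d n)) ℂ →
        Matrix (Fin (a ^ n) × Fin (b ^ n)) (Fin (a ^ n) × Fin (b ^ n)) ℂ)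
      (P : ∀ n : ℕ, Matrix (Fin (d n) × Fin (d n)) (Fin (d n) × Fin (d n)) ℂ),
      (∀ n, 0 < d n) ∧ (∀ n, IsLQCC (Λ n)) ∧ (∀ n, IsMaxEntRep (d n) (P n)) ∧
      Tendsto (fun n => traceNorm (Λ n (P n) - statePow ρ n)) atTop (nhds 0) ∧
      r = Filter.liminf (fun n : ℕ => Real.logb 2 (d n) / n) atTop}


/-! ### Majorization and composition of families of maps -/

/-- For vectors arranged in decreasing order, `MajorizesDesc q p` says that `q` majorizes `p`:
for every `k`, the sum of the `k` largest entries of `q` is at least that of `p`. -/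
def MajorizesDesc {M : ℕ} (q p : Fin M → ℝ) : Prop :=
  ∀ k : ℕ, k ≤ M →
    ∑ i ∈ Finset.univ.filter (fun i : Fin M => (i : ℕ) < k), p i ≤
      ∑ i ∈ Finset.univ.filter (fun i : Fin M => (i : ℕ) < k), q i

/-- `composeFam N f = f 0 ∘ f 1 ∘ ⋯ ∘ f (N-1)` (the identity for `N = 0`). -/
def composeFam {α : Type*} : (N : ℕ) → (Fin N → α → α) → α → α
  | 0, _ => id
  | N + 1, f => f 0 ∘ composeFam N (fun i => f i.succ)

end
section SchmidtAux

private theorem schmidt_aux (a b : ℕ) (hab : a ≤ b)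
    (ψ : Fin a × Fin b → ℂ) (hψ : UnitVec ψ) :
    ∃ (p : Fin a → ℝ) (A : Fin a → Fin a → ℂ) (B : Fin a → Fin b → ℂ),
      (∀ i, 0 ≤ p i) ∧ (∑ i, p i = 1) ∧ OrthonormalFam A ∧ OrthonormalFam B ∧
      ψ = ∑ i, (Real.sqrt (p i) : ℂ) • tensorVec (A i) (B i) := by
  classical
  set H : Matrix (Fin a) (Fin a) ℂ := ptraceB (projVec ψ) with hHdef
  have hH : H.IsHermitian := ptraceB_projVec_isHermitian ψ
  set μ : Fin a → ℝ := hH.eigenvalues with hμdef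
  set u : Fin a → EuclideanSpace ℂ (Fin a) := fun k => hH.eigenvectorBasis k with hudef
  set c : Fin a → Fin b → ℂ := fun k j => ∑ i, star (u k i) * ψ (i, j) with hcdef
  have hHapp : ∀ i i', H i i' = ∑ j, ψ (i, j) * star (ψ (i', j)) := fun i i' => rfl
  -- orthonormality of the eigenvectors
  have horth : ∀ k l, (∑ i, star (u k i) * u l i) = if k = l then 1 else 0 := by
    intro k l
    have h := orthonormal_iff_ite.mp hH.eigenvectorBasis.orthonormal k l
    simp [PiLp.inner_apply, RCLike.inner_apply, RCLike.star_def] at h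
    rw [← h]
    exact Finset.sum_congr rfl fun _ _ => mul_comm _ _
  -- the key computation
  have key : ∀ k l, (∑ j, star (c k j) * c l j) = if k = l then (μ k : ℂ) else 0 := by
    intro k l
    have expand : ∀ j, star (c k j) * c l j
        = ∑ i', ∑ i, star (u l i') * ((ψ (i', j) * star (ψ (i, j))) * u k i) := by
      intro j
      simp only [hcdef, star_sum, star_mul', star_star, Finset.sum_mul_sum]
      rw [Finset.sum_comm]
      exact Finset.sum_congr rfl fun i' _ => Finset.sum_congr rfl fun i _ => by ring
    calc (∑ j, star (c k j) * c l j)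
        = ∑ j, ∑ i', ∑ i, star (u l i') * ((ψ (i', j) * star (ψ (i, j))) * u k i) :=
          Finset.sum_congr rfl fun j _ => expand j
      _ = ∑ i', ∑ i, ∑ j, star (u l i') * ((ψ (i', j) * star (ψ (i, j))) * u k i) := by
          rw [Finset.sum_comm]
          exact Finset.sum_congr rfl fun i' _ => Finset.sum_comm
      _ = ∑ i', star (u l i') * ((H *ᵥ (u k : Fin a → ℂ)) i') := by
          refine Finset.sum_congr rfl fun i' _ => ?_
          show _ = star (u l i') * ∑ i, H i' i * u k i
          rw [Finset.mul_sum]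
          refine Finset.sum_congr rfl fun i _ => ?_
          rw [hHapp i' i, Finset.sum_mul, Finset.mul_sum]
      _ = ∑ i', star (u l i') * ((μ k : ℂ) * u k i') := by
          have hmv := hH.mulVec_eigenvectorBasis k
          refine Finset.sum_congr rfl fun i' _ => ?_
          have h5 : (H *ᵥ (u k : Fin a → ℂ)) i' = (μ k : ℂ) * u k i' := by
            have h6 := congrFun hmv i'
            simpa [Pi.smul_apply, Complex.real_smul] using h6
          rw [h5]
      _ = (μ k : ℂ) * ∑ i', star (u l i') * u k i' := by
          rw [Finset.mul_sum]
          exact Finset.sum_congr rfl fun i' _ => by ring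
      _ = if k = l then (μ k : ℂ) else 0 := by
          rw [horth l k]
          by_cases hkl : k = l
          · simp [hkl]
          · simp [hkl, Ne.symm hkl]
  -- nonnegativity of the eigenvalues
  have hμnonneg : ∀ k, 0 ≤ μ k := by
    intro k
    have h := key k k
    rw [if_pos rfl] at h
    have h0 : (0 : ℂ) ≤ (μ k : ℂ) := by
      rw [← h]
      exact Finset.sum_nonneg fun j _ => star_mul_self_nonneg _
    exact_mod_cast h0
  -- sum of eigenvalues is 1
  have hsum : ∑ k, μ k = 1 := by
    have htr1 : H.trace = 1 := by
      have hc1 : (∑ q : Fin a × Fin b, star (ψ q) * ψ q) = 1 := hψ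
      calc H.trace = ∑ i, ∑ j, ψ (i, j) * star (ψ (i, j)) := by
            simp only [Matrix.trace, Matrix.diag]
            exact Finset.sum_congr rfl fun i _ => hHapp i i
        _ = ∑ q : Fin a × Fin b, star (ψ q) * ψ q := by
            rw [Fintype.sum_prod_type]
            exact Finset.sum_congr rfl fun i _ =>
              Finset.sum_congr rfl fun j _ => mul_comm _ _
        _ = 1 := hc1
    have htr2 : H.trace = ∑ k, (μ k : ℂ) := by
      have hdiag : star (Matrix.IsHermitian.eigenvectorUnitary hH : Matrix (Fin a) (Fin a) ℂ) * H *
          (Matrix.IsHermitian.eigenvectorUnitary hH : Matrix (Fin a) (Fin a) ℂ) =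
          Matrix.diagonal (RCLike.ofReal ∘ μ) := by
        rw [← hH.conjStarAlgAut_star_eigenvectorUnitary, Unitary.conjStarAlgAut_apply,
          Unitary.coe_star, star_star]
      calc H.trace = ((star (Matrix.IsHermitian.eigenvectorUnitary hH :
              Matrix (Fin a) (Fin a) ℂ)) * H *
              (Matrix.IsHermitian.eigenvectorUnitary hH : Matrix (Fin a) (Fin a) ℂ)).trace := by
            rw [Matrix.trace_mul_cycle, ← Unitary.coe_star, Unitary.coe_mul_star_self, one_mul]
        _ = (Matrix.diagonal (RCLike.ofReal ∘ μ)).trace := by rw [hdiag]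
        _ = ∑ k, (μ k : ℂ) := by simp [Matrix.trace_diagonal]
    have : ((∑ k, μ k : ℝ) : ℂ) = 1 := by push_cast; rw [← htr2]; exact htr1
    exact_mod_cast this
  -- zero eigenvalue implies zero coefficient vector
  have hczero : ∀ k, μ k = 0 → ∀ j, c k j = 0 := by
    intro k hk j
    have h := key k k
    rw [if_pos rfl, hk] at h
    have h0 : (∑ j, star (c k j) * c k j) = 0 := by simpa using h
    have := (Finset.sum_eq_zero_iff_of_nonneg
      (fun j _ => star_mul_self_nonneg (c k j))).mp h0 j (Finset.mem_univ j)
    have h2 : star (c k j) * c k j = 0 := this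
    by_contra hne
    exact hne (by
      have := congrArg Complex.normSq h2
      simpa [Complex.normSq_eq_norm_sq, ← Complex.normSq_eq_norm_sq, Complex.mul_conj',
        Complex.star_def, Complex.normSq_eq_zero] using by
          have h3 : Complex.normSq (c k j) = 0 := by
            have : (starRingEnd ℂ) (c k j) * c k j = 0 := h2
            rw [mul_comm, Complex.mul_conj] at this
            exact_mod_cast this
          exact Complex.normSq_eq_zero.mp h3)
  -- reconstruction of ψ from the eigenbasis
  have recon : ∀ i j, ψ (i, j) = ∑ k, c k j * u k i := by
    intro i j
    have h := hH.eigenvectorBasis.sum_repr'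
      (WithLp.toLp 2 (fun i' => ψ (i', j)) : EuclideanSpace ℂ (Fin a))
    have h2 := congrArg (fun x : EuclideanSpace ℂ (Fin a) => x i) h
    have h3 : ∀ k, (inner ℂ (hH.eigenvectorBasis k)
        (WithLp.toLp 2 (fun i' => ψ (i', j)) : EuclideanSpace ℂ (Fin a)) : ℂ) = c k j := by
      intro k
      simp [PiLp.inner_apply, RCLike.inner_apply, RCLike.star_def, hcdef, hudef]
      exact Finset.sum_congr rfl fun _ _ => mul_comm _ _
    calc ψ (i, j) = ((∑ k, (inner ℂ (hH.eigenvectorBasis k)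
            (WithLp.toLp 2 (fun i' => ψ (i', j)) : EuclideanSpace ℂ (Fin a)) : ℂ) •
            hH.eigenvectorBasis k : EuclideanSpace ℂ (Fin a))) i := h2.symm
      _ = ∑ k, (inner ℂ (hH.eigenvectorBasis k)
            (WithLp.toLp 2 (fun i' => ψ (i', j)) : EuclideanSpace ℂ (Fin a)) : ℂ) * u k i := by
          rw [WithLp.ofLp_sum, Finset.sum_apply]
          exact Finset.sum_congr rfl fun k _ => rfl
      _ = ∑ k, c k j * u k i := Finset.sum_congr rfl fun k _ => by rw [h3 k]
  -- the normalized B-side vectors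
  set w : Fin a → Fin b → ℂ := fun k j => (((Real.sqrt (μ k))⁻¹ : ℝ) : ℂ) * c k j with hwdef
  have hw : ∀ k l, μ k ≠ 0 → μ l ≠ 0 →
      (∑ j, star (w k j) * w l j) = if k = l then 1 else 0 := by
    intro k l hk hl
    have hkpos : 0 < μ k := lt_of_le_of_ne (hμnonneg k) (Ne.symm hk)
    have hlpos : 0 < μ l := lt_of_le_of_ne (hμnonneg l) (Ne.symm hl)
    have hsk : Real.sqrt (μ k) ≠ 0 := Real.sqrt_ne_zero'.mpr hkpos
    have hsl : Real.sqrt (μ l) ≠ 0 := Real.sqrt_ne_zero'.mpr hlpos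
    have : (∑ j, star (w k j) * w l j)
        = (((Real.sqrt (μ k))⁻¹ : ℝ) : ℂ) * ((((Real.sqrt (μ l))⁻¹ : ℝ) : ℂ) *
            ∑ j, star (c k j) * c l j) := by
      rw [Finset.mul_sum, Finset.mul_sum]
      refine Finset.sum_congr rfl fun j _ => ?_
      simp only [hwdef, star_mul', Complex.star_def, Complex.conj_ofReal]
      ring
    rw [this, key k l]
    by_cases hkl : k = l
    · subst hkl
      rw [if_pos rfl, if_pos rfl]
      have h1 : (Real.sqrt (μ k))⁻¹ * ((Real.sqrt (μ k))⁻¹ * μ k) = 1 := by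
        rw [← mul_assoc, ← mul_inv, Real.mul_self_sqrt (le_of_lt hkpos), inv_mul_cancel₀ hk]
      exact_mod_cast h1
    · simp [hkl]
  -- extend the nonzero-eigenvalue w's to an orthonormal family on all of Fin a
  have hfr : Module.finrank ℂ (EuclideanSpace ℂ (Fin b)) = Fintype.card (Fin b) := by simp
  set s : Set (Fin b) := (fun k : Fin a => Fin.castLE hab k) '' {k | μ k ≠ 0} with hsdef
  set v : Fin b → EuclideanSpace ℂ (Fin b) :=
    fun j => if h : (j : ℕ) < a then WithLp.toLp 2 (fun j' => w ⟨(j : ℕ), h⟩ j') else 0 with hvdef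
  have hvs : ∀ k : Fin a, v (Fin.castLE hab k) = WithLp.toLp 2 (w k) := by
    intro k
    have hlt : ((Fin.castLE hab k : Fin b) : ℕ) < a := k.isLt
    simp only [hvdef, dif_pos hlt]
    rfl
  have hon : Orthonormal ℂ (s.restrict v) := by
    rw [orthonormal_iff_ite]
    rintro ⟨j₁, hj₁⟩ ⟨j₂, hj₂⟩
    obtain ⟨k₁, hk₁, rfl⟩ := hj₁
    obtain ⟨k₂, hk₂, rfl⟩ := hj₂
    simp only [Set.restrict_apply, hvs]
    have h := hw k₁ k₂ hk₁ hk₂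
    have hinner : (@inner ℂ (EuclideanSpace ℂ (Fin b)) _ (WithLp.toLp 2 (w k₁))
        (WithLp.toLp 2 (w k₂))) = ∑ j, star (w k₁ j) * w k₂ j := by
      simp [PiLp.inner_apply, RCLike.inner_apply, RCLike.star_def]
      exact Finset.sum_congr rfl fun _ _ => mul_comm _ _
    change inner ℂ (v (Fin.castLE hab k₁)) (v (Fin.castLE hab k₂)) = _
    rw [hvs, hvs, hinner, h]
    by_cases hkk : k₁ = k₂
    · simp [hkk]
    · rw [if_neg hkk, if_neg]
      intro hcontra
      exact hkk (Fin.castLE_injective hab (congrArg Subtype.val hcontra))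
  obtain ⟨β, hβ⟩ := hon.exists_orthonormalBasis_extension_of_card_eq hfr
  -- assemble the answer
  refine ⟨μ, fun k => u k, fun k => β (Fin.castLE hab k), hμnonneg, hsum, ?_, ?_, ?_⟩
  · intro k l
    rw [show cdot (u k) (u l) = ∑ i, star (u k i) * u l i from rfl, horth k l]
    by_cases hkl : k = l <;> simp [hkl]
  · intro k l
    have h := orthonormal_iff_ite.mp β.orthonormal (Fin.castLE hab k) (Fin.castLE hab l)
    have hinner : cdot (β (Fin.castLE hab k) : Fin b → ℂ) (β (Fin.castLE hab l)) =
        (inner ℂ (β (Fin.castLE hab k)) (β (Fin.castLE hab l)) : ℂ) := by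
      simp [cdot, PiLp.inner_apply, RCLike.inner_apply, RCLike.star_def]
      exact Finset.sum_congr rfl fun _ _ => mul_comm _ _
    rw [hinner, h]
    by_cases hkl : k = l
    · simp [hkl]
    · rw [if_neg hkl, if_neg fun hcontra => hkl (Fin.castLE_injective hab hcontra)]
  · funext q
    obtain ⟨i, j⟩ := q
    have hBc : ∀ k, (Real.sqrt (μ k) : ℂ) * β (Fin.castLE hab k) j = c k j := by
      intro k
      by_cases hk : μ k = 0
      · rw [hczero k hk j, hk]
        simp
      · have hmem : Fin.castLE hab k ∈ s := ⟨k, hk, rfl⟩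
        have := hβ _ hmem
        rw [this, hvs k]
        simp only [hwdef]
        have hkpos : 0 < μ k := lt_of_le_of_ne (hμnonneg k) (Ne.symm hk)
        have hsk : Real.sqrt (μ k) ≠ 0 := by positivity
        rw [← mul_assoc, ← Complex.ofReal_mul, mul_inv_cancel₀ hsk]
        simp
    calc ψ (i, j) = ∑ k, c k j * u k i := recon i j
      _ = ∑ k, ((Real.sqrt (μ k) : ℂ) * β (Fin.castLE hab k) j) * u k i :=
          Finset.sum_congr rfl fun k _ => by rw [hBc k]
      _ = (∑ k, (Real.sqrt (μ k) : ℂ) •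
            tensorVec (fun i' => u k i') (fun j' => β (Fin.castLE hab k) j')) (i, j) := by
          rw [Finset.sum_apply]
          refine Finset.sum_congr rfl fun k _ => ?_
          simp only [Pi.smul_apply, tensorVec, smul_eq_mul]
          ring

end SchmidtAux

/-- **Schmidt decomposition.** Every unit vector in `C^a ⊗ C^b` is a combination
`∑ᵢ √pᵢ · (aᵢ ⊗ bᵢ)` of tensor products of orthonormal families, with `pᵢ ≥ 0` summing to 1. -/
theorem schmidt_decomposition (a b : ℕ) (ha : 0 < a) (hb : 0 < b) (m : ℕ) (hm : m = min a b)
    (ψ : Fin a × Fin b → ℂ) (hψ : UnitVec ψ) :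
    ∃ (p : Fin m → ℝ) (A : Fin m → Fin a → ℂ) (B : Fin m → Fin b → ℂ),
      (∀ i, 0 ≤ p i) ∧ (∑ i, p i = 1) ∧ OrthonormalFam A ∧ OrthonormalFam B ∧
      ψ = ∑ i, (Real.sqrt (p i) : ℂ) • tensorVec (A i) (B i) := by
  rcases le_or_gt a b with hab | hba
  · -- a ≤ b
    have hma : m = a := by omega
    obtain ⟨p, A, B, hp, hps, hA, hB, hrec⟩ := schmidt_aux a b hab ψ hψ
    set e : Fin m ≃ Fin a := finCongr hma with hedef
    refine ⟨fun i => p (e i), fun i => A (e i), fun i => B (e i), fun i => hp _, ?_, ?_, ?_, ?_⟩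
    · exact (Equiv.sum_comp e p).trans hps
    · intro i j
      rw [hA (e i) (e j)]
      simp [EmbeddingLike.apply_eq_iff_eq]
    · intro i j
      rw [hB (e i) (e j)]
      simp [EmbeddingLike.apply_eq_iff_eq]
    · rw [hrec]
      exact (Equiv.sum_comp e fun k =>
        (Real.sqrt (p k) : ℂ) • tensorVec (A k) (B k)).symm
  · -- b < a : apply the auxiliary lemma to the swapped vector
    have hmb : m = b := by omega
    set ψ' : Fin b × Fin a → ℂ := fun q => ψ (q.2, q.1) with hψ'def
    have hψ' : UnitVec ψ' := by
      unfold UnitVec cdot at hψ ⊢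
      rw [← hψ]
      exact Fintype.sum_equiv (Equiv.prodComm (Fin b) (Fin a)) _ _ (fun q => rfl)
    obtain ⟨p, A, B, hp, hps, hA, hB, hrec⟩ := schmidt_aux b a (le_of_lt hba) ψ' hψ'
    set e : Fin m ≃ Fin b := finCongr hmb with hedef
    refine ⟨fun i => p (e i), fun i => B (e i), fun i => A (e i), fun i => hp _, ?_, ?_, ?_, ?_⟩
    · exact (Equiv.sum_comp e p).trans hps
    · intro i j
      rw [hB (e i) (e j)]
      simp [EmbeddingLike.apply_eq_iff_eq]
    · intro i j
      rw [hA (e i) (e j)]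
      simp [EmbeddingLike.apply_eq_iff_eq]
    · funext q
      obtain ⟨i, j⟩ := q
      have h2 : ψ' (j, i) = (∑ k, (Real.sqrt (p k) : ℂ) • tensorVec (A k) (B k)) (j, i) :=
        congrFun hrec (j, i)
      calc ψ (i, j) = (∑ k, (Real.sqrt (p k) : ℂ) • tensorVec (A k) (B k)) (j, i) := h2
        _ = ∑ k : Fin b, (Real.sqrt (p k) : ℂ) * (B k i * A k j) := by
            rw [Finset.sum_apply]
            refine Finset.sum_congr rfl fun k _ => ?_
            simp only [Pi.smul_apply, tensorVec, smul_eq_mul]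
            ring
        _ = ∑ i' : Fin m, (Real.sqrt (p (e i')) : ℂ) * (B (e i') i * A (e i') j) :=
            (Equiv.sum_comp e fun k => (Real.sqrt (p k) : ℂ) * (B k i * A k j)).symm
        _ = (∑ i' : Fin m, (Real.sqrt (p (e i')) : ℂ) •
              tensorVec (B (e i')) (A (e i'))) (i, j) := by
            rw [Finset.sum_apply]
            refine Finset.sum_congr rfl fun k _ => ?_
            simp only [Pi.smul_apply, tensorVec, smul_eq_mul]
end

section
/- Let Λ : Matrix (Fin n) (Fin n) ℂ → Matrix (Fin m) (Fin m) ℂ be a linear map that is positive (it maps positive semidefinite matrices to positive semidefinite matrices) and trace preserving (trace(Λ(B)) = trace(B) for all B). Then for every Hermitian matrix B, ‖Λ(B)‖₁ ≤ ‖B‖₁. -/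
open scoped BigOperators Classical ComplexOrder
open Matrix Kronecker Filter

section AuxTraceNorm
open scoped ComplexOrder
variable {k : ℕ}

private lemma trace_conj (U : Matrix (Fin k) (Fin k) ℂ) (hU : U ∈ Matrix.unitaryGroup (Fin k) ℂ)
    (D : Matrix (Fin k) (Fin k) ℂ) : (U * D * Uᴴ).trace = D.trace := by
  rw [Matrix.trace_mul_cycle]
  have : Uᴴ * U = 1 := by
    rw [← Matrix.star_eq_conjTranspose]
    exact (Matrix.mem_unitaryGroup_iff'.mp hU)
  rw [this, Matrix.one_mul]

private lemma conj_psd (U : Matrix (Fin k) (Fin k) ℂ) (f : Fin k → ℝ) (hf : ∀ i, 0 ≤ f i) :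
    (U * Matrix.diagonal (fun i => (f i : ℂ)) * Uᴴ).PosSemidef := by
  apply Matrix.PosSemidef.mul_mul_conjTranspose_same
  refine Matrix.posSemidef_diagonal_iff.mpr fun i => ?_
  simpa using hf i

private lemma conj_mul_conj (U D E : Matrix (Fin k) (Fin k) ℂ) (hUU : Uᴴ * U = 1) :
    (U * D * Uᴴ) * (U * E * Uᴴ) = U * (D * E) * Uᴴ := by
  calc (U * D * Uᴴ) * (U * E * Uᴴ) = U * (D * (Uᴴ * (U * (E * Uᴴ)))) := by
        simp only [Matrix.mul_assoc]
    _ = U * (D * E) * Uᴴ := by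
        rw [← Matrix.mul_assoc Uᴴ U, hUU, Matrix.one_mul]
        simp only [Matrix.mul_assoc]

open scoped MatrixOrder in
/-- traceNorm of a Hermitian matrix is the sum of absolute values of eigenvalues. -/
private lemma traceNorm_herm (A : Matrix (Fin k) (Fin k) ℂ) (hA : A.IsHermitian) :
    traceNorm A = ∑ i, |hA.eigenvalues i| := by
  set hM := Matrix.posSemidef_conjTranspose_mul_self A with hMdef
  set U : Matrix (Fin k) (Fin k) ℂ := (hA.eigenvectorUnitary : Matrix (Fin k) (Fin k) ℂ) with hUdef
  have hU : U ∈ Matrix.unitaryGroup (Fin k) ℂ := hA.eigenvectorUnitary.2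
  set S : Matrix (Fin k) (Fin k) ℂ :=
    U * Matrix.diagonal (fun i => Complex.ofReal |hA.eigenvalues i|) * Uᴴ with hSdef
  have hS : S.PosSemidef := conj_psd U _ fun i => abs_nonneg _
  have hUU : Uᴴ * U = 1 := by
    rw [← Matrix.star_eq_conjTranspose]; exact Matrix.mem_unitaryGroup_iff'.mp hU
  have hS2 : S ^ 2 = Aᴴ * A := by
    have hspec := hA.spectral_theorem
    rw [hA.eq]
    conv_rhs => rw [hspec]
    rw [Unitary.conjStarAlgAut_apply, Matrix.star_eq_conjTranspose, sq, hSdef, conj_mul_conj U _ _ hUU,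
      conj_mul_conj U _ _ hUU, Matrix.diagonal_mul_diagonal, Matrix.diagonal_mul_diagonal]
    congr 3
    rw [funext_iff]
    intro i
    simp only [Function.comp_apply, Pi.mul_apply]
    norm_cast
    rw [abs_mul_abs_self]
    exact rfl
  have hSsqrt : S = CFC.sqrt (Aᴴ * A) := by
    exact ((CFC.sqrt_eq_iff _ _ hM.nonneg hS.nonneg).mpr (by rw [← sq]; exact hS2)).symm
  have htrS : S.trace = ((∑ i, |hA.eigenvalues i| : ℝ) : ℂ) := by
    rw [hSdef, trace_conj U hU, Matrix.trace_diagonal]; push_cast; rfl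
  have htrsqrt : (CFC.sqrt (Aᴴ * A)).trace
      = ((∑ i, Real.sqrt (hM.isHermitian.eigenvalues i) : ℝ) : ℂ) := by
    rw [CFC.sqrt_eq_cfc, cfc_nnreal_eq_real _ (Aᴴ * A), hM.1.cfc_eq, Matrix.IsHermitian.cfc,
      Unitary.conjStarAlgAut_apply, Matrix.star_eq_conjTranspose,
      trace_conj _ hM.isHermitian.eigenvectorUnitary.2, Matrix.trace_diagonal]
    push_cast
    refine Finset.sum_congr rfl fun i _ => ?_
    simp [max_eq_left (hM.eigenvalues_nonneg i)]
  have h1 : ((∑ i, Real.sqrt (hM.isHermitian.eigenvalues i) : ℝ) : ℂ)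
      = ((∑ i, |hA.eigenvalues i| : ℝ) : ℂ) := by rw [← htrsqrt, ← hSsqrt, htrS]
  have h2 := Complex.ofReal_injective h1
  rw [traceNorm, h2]

/-- diag entries of Uᴴ P U are nonneg (real part) when P is psd. -/
private lemma diag_conj_nonneg (U P : Matrix (Fin k) (Fin k) ℂ) (hP : P.PosSemidef) (i : Fin k) :
    0 ≤ ((Uᴴ * P * U) i i).re := by
  have h := (hP.conjTranspose_mul_mul_same U).dotProduct_mulVec_nonneg (Pi.single i 1)
  have h2 : dotProduct (star (Pi.single i 1))
      ((Uᴴ * P * U) *ᵥ (Pi.single i (1 : ℂ))) = (Uᴴ * P * U) i i := by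
    rw [Matrix.mulVec_single]
    simp [dotProduct, Pi.single_apply, apply_ite, Finset.sum_ite_eq]
  rw [← h2]
  exact (Complex.le_def.mp h).1

private lemma sum_abs_eig_le (C P Q : Matrix (Fin k) (Fin k) ℂ) (hC : C.IsHermitian)
    (hP : P.PosSemidef) (hQ : Q.PosSemidef) (hCPQ : C = P - Q) :
    ∑ i, |hC.eigenvalues i| ≤ P.trace.re + Q.trace.re := by
  set U : Matrix (Fin k) (Fin k) ℂ := (hC.eigenvectorUnitary : Matrix (Fin k) (Fin k) ℂ) with hUdef
  have hU : U ∈ Matrix.unitaryGroup (Fin k) ℂ := hC.eigenvectorUnitary.2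
  have hdiag : Uᴴ * C * U = Matrix.diagonal ((↑) ∘ hC.eigenvalues) := by
    have := hC.conjStarAlgAut_star_eigenvectorUnitary
    rwa [Unitary.conjStarAlgAut_star_apply, Matrix.star_eq_conjTranspose] at this
  have heig : ∀ i, hC.eigenvalues i = ((Uᴴ * P * U) i i).re - ((Uᴴ * Q * U) i i).re := by
    intro i
    have h1 : (Uᴴ * C * U) i i = ((hC.eigenvalues i : ℝ) : ℂ) := by
      rw [hdiag]; simp
    have h2 : Uᴴ * C * U = Uᴴ * P * U - Uᴴ * Q * U := by
      rw [hCPQ]; noncomm_ring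
    have h3 : ((hC.eigenvalues i : ℝ) : ℂ) = (Uᴴ * P * U) i i - (Uᴴ * Q * U) i i := by
      rw [← h1, h2]; simp [Matrix.sub_apply]
    have := congrArg Complex.re h3
    simpa using this
  have habs : ∀ i, |hC.eigenvalues i| ≤ ((Uᴴ * P * U) i i).re + ((Uᴴ * Q * U) i i).re := by
    intro i
    rw [heig i]
    have hp := diag_conj_nonneg U P hP i
    have hq := diag_conj_nonneg U Q hQ i
    rw [abs_sub_le_iff]
    constructor <;> linarith
  calc ∑ i, |hC.eigenvalues i|
      ≤ ∑ i, (((Uᴴ * P * U) i i).re + ((Uᴴ * Q * U) i i).re) :=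
        Finset.sum_le_sum fun i _ => habs i
    _ = (Uᴴ * P * U).trace.re + (Uᴴ * Q * U).trace.re := by
        rw [Finset.sum_add_distrib]
        simp [Matrix.trace, Matrix.diag, Complex.re_sum]
    _ = P.trace.re + Q.trace.re := by
        have hUU : U * Uᴴ = 1 := by
          rw [← Matrix.star_eq_conjTranspose]
          exact Matrix.mem_unitaryGroup_iff.mp hU
        have key : ∀ M : Matrix (Fin k) (Fin k) ℂ, (Uᴴ * M * U).trace = M.trace := by
          intro M
          rw [Matrix.trace_mul_cycle, hUU, Matrix.one_mul]
        rw [key, key]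

end AuxTraceNorm

/-- A positive trace-preserving linear map does not increase the trace norm of Hermitian
matrices. -/
theorem traceNorm_le_of_positive_tracePreserving {n m : ℕ}
    (Λ : Matrix (Fin n) (Fin n) ℂ →ₗ[ℂ] Matrix (Fin m) (Fin m) ℂ)
    (hpos : ∀ B : Matrix (Fin n) (Fin n) ℂ, B.PosSemidef → (Λ B).PosSemidef)
    (htr : ∀ B : Matrix (Fin n) (Fin n) ℂ, (Λ B).trace = B.trace)
    (B : Matrix (Fin n) (Fin n) ℂ) (hB : B.IsHermitian) :
    traceNorm (Λ B) ≤ traceNorm B := by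
  classical
  set U : Matrix (Fin n) (Fin n) ℂ := (hB.eigenvectorUnitary : Matrix (Fin n) (Fin n) ℂ) with hUdef
  have hU : U ∈ Matrix.unitaryGroup (Fin n) ℂ := hB.eigenvectorUnitary.2
  set Bp : Matrix (Fin n) (Fin n) ℂ :=
    U * Matrix.diagonal (fun i => ((max (hB.eigenvalues i) 0 : ℝ) : ℂ)) * Uᴴ with hBpdef
  set Bm : Matrix (Fin n) (Fin n) ℂ :=
    U * Matrix.diagonal (fun i => ((max (-hB.eigenvalues i) 0 : ℝ) : ℂ)) * Uᴴ with hBmdef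
  have hBp : Bp.PosSemidef := conj_psd U _ fun i => le_max_right _ _
  have hBm : Bm.PosSemidef := conj_psd U _ fun i => le_max_right _ _
  have hBsub : B = Bp - Bm := by
    conv_lhs => rw [hB.spectral_theorem]
    rw [Unitary.conjStarAlgAut_apply, hBpdef, hBmdef, Matrix.star_eq_conjTranspose, ← Matrix.sub_mul, ← Matrix.mul_sub,
      Matrix.diagonal_sub]
    congr 3
    rw [funext_iff]
    intro i
    simp only [Function.comp_apply, Pi.sub_apply]
    have : hB.eigenvalues i = max (hB.eigenvalues i) 0 - max (-hB.eigenvalues i) 0 := by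
      rcases le_or_gt 0 (hB.eigenvalues i) with h | h
      · rw [max_eq_left h, max_eq_right (by linarith)]; ring
      · rw [max_eq_right (by linarith), max_eq_left (by linarith)]; ring
    norm_cast
    rw [← this]
    exact rfl
  have hLB : Λ B = Λ Bp - Λ Bm := by rw [hBsub, map_sub]
  have hLBp := hpos Bp hBp
  have hLBm := hpos Bm hBm
  have hLherm : (Λ B).IsHermitian := by
    rw [hLB]; exact hLBp.1.sub hLBm.1
  have htrBp : (Λ Bp).trace.re = Bp.trace.re := by rw [htr]
  have htrBm : (Λ Bm).trace.re = Bm.trace.re := by rw [htr]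
  have step1 : traceNorm (Λ B) ≤ (Λ Bp).trace.re + (Λ Bm).trace.re := by
    rw [traceNorm_herm _ hLherm]
    exact sum_abs_eig_le _ _ _ hLherm hLBp hLBm hLB
  have step2 : Bp.trace.re + Bm.trace.re = traceNorm B := by
    rw [traceNorm_herm _ hB]
    have h1 : Bp.trace = ((∑ i, max (hB.eigenvalues i) 0 : ℝ) : ℂ) := by
      rw [hBpdef, trace_conj U hU, Matrix.trace_diagonal]; push_cast; rfl
    have h2 : Bm.trace = ((∑ i, max (-hB.eigenvalues i) 0 : ℝ) : ℂ) := by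
      rw [hBmdef, trace_conj U hU, Matrix.trace_diagonal]; push_cast; rfl
    rw [h1, h2, Complex.ofReal_re, Complex.ofReal_re, ← Finset.sum_add_distrib]
    refine Finset.sum_congr rfl fun i _ => ?_
    rw [abs_eq_max_neg]
    rcases le_or_gt 0 (hB.eigenvalues i) with h | h
    · rw [max_eq_left h, max_eq_right (by linarith), max_eq_left (by linarith)]; ring
    · rw [max_eq_right (by linarith), max_eq_left (by linarith), max_eq_right (by linarith)]
      ring
  calc traceNorm (Λ B) ≤ (Λ Bp).trace.re + (Λ Bm).trace.re := step1
    _ = Bp.trace.re + Bm.trace.re := by rw [htrBp, htrBm]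
    _ = traceNorm B := step2
end

section
/- Let M ≥ 1, let (χ_m)_{m=1}^M and (κ_m)_{m=1}^M be orthonormal bases of C^M, and let p, q : Fin M → ℝ be nonincreasing sequences of nonnegative reals each summing to 1 such that q majorizes p. Set Ψ = ∑_{m=1}^M √(p_m) · (χ_m ⊗ κ_m) and Φ = ∑_{m=1}^M √(q_m) · (χ_m ⊗ κ_m). Then there exist an integer N < M and completely positive maps Λ_1, …, Λ_N on matrices over Fin M × Fin M, each of the form Λ(ω) = (C⊗U) ω (C⊗U)† + (D⊗V) ω (D⊗V)† with U, V ∈ M_M(ℂ) unitary and C, D ∈ M_M(ℂ) satisfying C†C + D†D = 1, such that (Λ_1 ∘ Λ_2 ∘ ⋯ ∘ Λ_N)(|Ψ⟩⟨Ψ|) = |Φ⟩⟨Φ| (for N = 0 the composition is the identity). -/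
open scoped BigOperators Classical ComplexOrder
open Matrix Kronecker Filter

noncomputable section
namespace NielsenAux
open Matrix Kronecker

lemma projVec_conj {ι : Type*} [Fintype ι] (A : Matrix ι ι ℂ) (ψ : ι → ℂ) :
    A * projVec ψ * Aᴴ = projVec (A.mulVec ψ) := by
  ext i j
  simp only [projVec, Matrix.mul_apply, Matrix.of_apply, Matrix.conjTranspose_apply,
    Matrix.mulVec, dotProduct, star_sum, star_mul', star_star,
    Finset.mul_sum, Finset.sum_mul]
  exact Finset.sum_congr rfl fun k _ => Finset.sum_congr rfl fun l _ => by ring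

lemma projVec_smul {ι : Type*} (c : ℂ) (ψ : ι → ℂ) :
    projVec (c • ψ) = (c * star c) • projVec ψ := by
  ext i j
  simp only [projVec, Matrix.of_apply, Pi.smul_apply, smul_eq_mul, Matrix.smul_apply,
    star_mul']
  ring

lemma kron_mulVec {a b : ℕ} (A : Matrix (Fin a) (Fin a) ℂ) (B : Matrix (Fin b) (Fin b) ℂ)
    (u : Fin a → ℂ) (v : Fin b → ℂ) :
    (A ⊗ₖ B).mulVec (tensorVec u v) = tensorVec (A.mulVec u) (B.mulVec v) := by
  ext ⟨i, j⟩
  simp only [Matrix.mulVec, dotProduct, tensorVec, Matrix.kroneckerMap_apply,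
    Fintype.sum_prod_type]
  rw [Finset.sum_mul_sum]
  exact Finset.sum_congr rfl fun k _ => Finset.sum_congr rfl fun l _ => by ring

end NielsenAux
end
namespace NielsenAux
open Matrix Kronecker

variable {M : ℕ}

lemma star_ite_c (c : Prop) [Decidable c] : star (if c then (1:ℂ) else 0) = if c then 1 else 0 := by
  split_ifs <;> simp

/-- Matrix whose columns are the vectors `χ m`. -/
def basMat (χ : Fin M → Fin M → ℂ) : Matrix (Fin M) (Fin M) ℂ := Matrix.of fun i m => χ m i

lemma basMat_conj_mul {χ : Fin M → Fin M → ℂ} (hχ : OrthonormalFam χ) :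
    (basMat χ)ᴴ * basMat χ = 1 := by
  ext m m'
  have h := hχ m m'
  simp only [cdot] at h
  simp only [Matrix.mul_apply, basMat, Matrix.conjTranspose_apply, Matrix.of_apply,
    Matrix.one_apply, h]
  split_ifs <;> rfl

lemma basMat_mul_conj {χ : Fin M → Fin M → ℂ} (hχ : OrthonormalFam χ) :
    basMat χ * (basMat χ)ᴴ = 1 :=
  mul_eq_one_comm.mp (basMat_conj_mul hχ)

lemma basMat_conj_mulVec {χ : Fin M → Fin M → ℂ} (hχ : OrthonormalFam χ) (m : Fin M) :
    (basMat χ)ᴴ.mulVec (χ m) = fun k => if k = m then 1 else 0 := by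
  ext k
  have h := hχ k m
  simp only [cdot] at h
  simp only [Matrix.mulVec, dotProduct, basMat, Matrix.conjTranspose_apply,
    Matrix.of_apply, h]
  split_ifs <;> rfl

lemma basMat_mulVec_ite (χ : Fin M → Fin M → ℂ) (c : ℂ) (m : Fin M) :
    (basMat χ).mulVec (fun k => if k = m then c else 0) = fun i => c * χ m i := by
  ext i
  simp [Matrix.mulVec, dotProduct, basMat, mul_ite, Finset.sum_ite_eq', mul_comm]

/-- Permutation matrix of `σ` (mapping `e m` to `e (σ m)`). -/
def permMat (σ : Equiv.Perm (Fin M)) : Matrix (Fin M) (Fin M) ℂ :=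
  Matrix.of fun i m => if i = σ m then 1 else 0

lemma permMat_conj_mul (σ : Equiv.Perm (Fin M)) : (permMat σ)ᴴ * permMat σ = 1 := by
  ext m m'
  simp only [Matrix.mul_apply, permMat, Matrix.conjTranspose_apply, Matrix.of_apply,
    star_ite_c, ite_mul, one_mul, zero_mul, Matrix.one_apply]
  rw [Finset.sum_ite_eq' Finset.univ (σ m) (fun x => if x = σ m' then (1:ℂ) else 0)]
  simp [EmbeddingLike.apply_eq_iff_eq]

lemma permMat_mul_conj (σ : Equiv.Perm (Fin M)) : permMat σ * (permMat σ)ᴴ = 1 :=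
  mul_eq_one_comm.mp (permMat_conj_mul σ)

lemma permMat_mulVec_ite (σ : Equiv.Perm (Fin M)) (c : ℂ) (m : Fin M) :
    (permMat σ).mulVec (fun k => if k = m then c else 0) =
      fun i => if i = σ m then c else 0 := by
  ext i
  simp [Matrix.mulVec, dotProduct, permMat, ite_mul, mul_ite, mul_zero, mul_one,
    Finset.sum_ite_eq']

lemma diagonal_mulVec_ite (d : Fin M → ℂ) (c : ℂ) (m : Fin M) :
    (Matrix.diagonal d).mulVec (fun k => if k = m then c else 0) =
      fun k => if k = m then d m * c else 0 := by
  ext k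
  simp only [Matrix.mulVec, dotProduct, Matrix.diagonal_apply, ite_mul, mul_ite,
    mul_zero, zero_mul, ite_self, Finset.sum_ite_eq', Finset.mem_univ, if_true]
  by_cases h : k = m <;> simp [h]

end NielsenAux
namespace NielsenAux
open Matrix Kronecker

variable {M : ℕ}

lemma mulVec_sum {ι m n : Type*} [Fintype n] [Fintype ι] (A : Matrix m n ℂ) (f : ι → n → ℂ) :
    A.mulVec (∑ i, f i) = ∑ i, A.mulVec (f i) := by
  simp only [← Matrix.mulVecLin_apply]
  exact map_sum _ _ _

lemma cancel_left {X : Matrix (Fin M) (Fin M) ℂ} (hX : Xᴴ * X = 1)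
    {Z : Matrix (Fin M) (Fin M) ℂ} : Xᴴ * (X * Z) = Z := by
  rw [← Matrix.mul_assoc, hX, Matrix.one_mul]

lemma sandwich_mul {X : Matrix (Fin M) (Fin M) ℂ} (hX : Xᴴ * X = 1)
    (A B : Matrix (Fin M) (Fin M) ℂ) :
    (X * A * Xᴴ) * (X * B * Xᴴ) = X * (A * B) * Xᴴ := by
  simp only [Matrix.mul_assoc]
  rw [cancel_left hX]

lemma sandwich_conjT (X A : Matrix (Fin M) (Fin M) ℂ) :
    (X * A * Xᴴ)ᴴ = X * Aᴴ * Xᴴ := by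
  simp [Matrix.conjTranspose_mul, Matrix.mul_assoc]

lemma tensorVec_smul_left {a b : ℕ} (c : ℂ) (u : Fin a → ℂ) (v : Fin b → ℂ) :
    tensorVec (fun i => c * u i) v = c • tensorVec u v := by
  ext ⟨i, j⟩
  simp [tensorVec, mul_assoc]

/-- The two-outcome local step: converts `Ψ_r` into `Ψ_{r'}` when `r'` is obtained from `r`
by "unmixing" coordinates `a`, `b`. -/
lemma step_exists (χ κ : Fin M → Fin M → ℂ) (hχ : OrthonormalFam χ) (hκ : OrthonormalFam κ)
    (r r' : Fin M → ℝ) (hr0 : ∀ m, 0 ≤ r m) (hr'0 : ∀ m, 0 ≤ r' m)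
    (a b : Fin M) (hab : a ≠ b) (hra : 0 < r a) (hrb : 0 < r b)
    (t : ℝ) (ht0 : 0 ≤ t) (ht1 : t ≤ 1)
    (heqa : t * r' a + (1 - t) * r' b = r a) (heqb : t * r' b + (1 - t) * r' a = r b)
    (hoff : ∀ m, m ≠ a → m ≠ b → r' m = r m) :
    ∃ C D U V : Matrix (Fin M) (Fin M) ℂ,
      U ∈ Matrix.unitaryGroup (Fin M) ℂ ∧ V ∈ Matrix.unitaryGroup (Fin M) ℂ ∧
      Cᴴ * C + Dᴴ * D = 1 ∧
      (C ⊗ₖ U) * projVec (∑ m, (Real.sqrt (r m) : ℂ) • tensorVec (χ m) (κ m)) * (C ⊗ₖ U)ᴴ +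
        (D ⊗ₖ V) * projVec (∑ m, (Real.sqrt (r m) : ℂ) • tensorVec (χ m) (κ m)) * (D ⊗ₖ V)ᴴ =
        projVec (∑ m, (Real.sqrt (r' m) : ℂ) • tensorVec (χ m) (κ m)) := by
  have hba : b ≠ a := hab.symm
  set σ : Equiv.Perm (Fin M) := Equiv.swap a b with hσ
  have hσa : σ a = b := Equiv.swap_apply_left a b
  have hσb : σ b = a := Equiv.swap_apply_right a b
  have hσo : ∀ m, m ≠ a → m ≠ b → σ m = m := fun m h1 h2 => Equiv.swap_apply_of_ne_of_ne h1 h2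
  set x : Fin M → ℝ := fun m =>
    if m = a then Real.sqrt (t * r' a / r a) else
    if m = b then Real.sqrt (t * r' b / r b) else Real.sqrt t with hx
  set y : Fin M → ℝ := fun m =>
    if m = a then Real.sqrt ((1 - t) * r' b / r a) else
    if m = b then Real.sqrt ((1 - t) * r' a / r b) else Real.sqrt (1 - t) with hy
  have ht1' : 0 ≤ 1 - t := by linarith
  have hxa : x a = Real.sqrt (t * r' a / r a) := by simp [hx]
  have hxb : x b = Real.sqrt (t * r' b / r b) := by simp [hx, hba]
  have hxo : ∀ m, m ≠ a → m ≠ b → x m = Real.sqrt t := by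
    intro m h1 h2; simp [hx, h1, h2]
  have hya : y a = Real.sqrt ((1 - t) * r' b / r a) := by simp [hy]
  have hyb : y b = Real.sqrt ((1 - t) * r' a / r b) := by simp [hy, hba]
  have hyo : ∀ m, m ≠ a → m ≠ b → y m = Real.sqrt (1 - t) := by
    intro m h1 h2; simp [hy, h1, h2]
  -- key identities
  have key1 : ∀ m, x m * Real.sqrt (r m) = Real.sqrt t * Real.sqrt (r' m) := by
    intro m
    by_cases hma : m = a
    · subst hma
      rw [hxa, ← Real.sqrt_mul (div_nonneg (mul_nonneg ht0 (hr'0 _)) (hr0 _)),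
        div_mul_cancel₀ _ hra.ne', Real.sqrt_mul ht0]
    by_cases hmb : m = b
    · subst hmb
      rw [hxb, ← Real.sqrt_mul (div_nonneg (mul_nonneg ht0 (hr'0 _)) (hr0 _)),
        div_mul_cancel₀ _ hrb.ne', Real.sqrt_mul ht0]
    · rw [hxo m hma hmb, hoff m hma hmb]
  have key2 : ∀ m, y m * Real.sqrt (r m) = Real.sqrt (1 - t) * Real.sqrt (r' (σ m)) := by
    intro m
    by_cases hma : m = a
    · subst hma
      rw [hya, hσa, ← Real.sqrt_mul (div_nonneg (mul_nonneg ht1' (hr'0 _)) (hr0 _)),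
        div_mul_cancel₀ _ hra.ne', Real.sqrt_mul ht1']
    by_cases hmb : m = b
    · subst hmb
      rw [hyb, hσb, ← Real.sqrt_mul (div_nonneg (mul_nonneg ht1' (hr'0 _)) (hr0 _)),
        div_mul_cancel₀ _ hrb.ne', Real.sqrt_mul ht1']
    · rw [hyo m hma hmb, hσo m hma hmb, hoff m hma hmb]
  have key3 : ∀ m, x m * x m + y m * y m = 1 := by
    intro m
    by_cases hma : m = a
    · subst hma
      rw [hxa, hya, Real.mul_self_sqrt (div_nonneg (mul_nonneg ht0 (hr'0 _)) (hr0 _)),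
        Real.mul_self_sqrt (div_nonneg (mul_nonneg ht1' (hr'0 _)) (hr0 _)),
        ← add_div, heqa, div_self hra.ne']
    by_cases hmb : m = b
    · subst hmb
      rw [hxb, hyb, Real.mul_self_sqrt (div_nonneg (mul_nonneg ht0 (hr'0 _)) (hr0 _)),
        Real.mul_self_sqrt (div_nonneg (mul_nonneg ht1' (hr'0 _)) (hr0 _)),
        ← add_div, heqb, div_self hrb.ne']
    · rw [hxo m hma hmb, hyo m hma hmb, Real.mul_self_sqrt ht0, Real.mul_self_sqrt ht1']
      ring
  -- matrices
  set X : Matrix (Fin M) (Fin M) ℂ := basMat χ with hX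
  set Xk : Matrix (Fin M) (Fin M) ℂ := basMat κ with hXk
  have hXu : Xᴴ * X = 1 := basMat_conj_mul hχ
  have hXu' : X * Xᴴ = 1 := basMat_mul_conj hχ
  have hXku : Xkᴴ * Xk = 1 := basMat_conj_mul hκ
  have hXku' : Xk * Xkᴴ = 1 := basMat_mul_conj hκ
  set P : Matrix (Fin M) (Fin M) ℂ := permMat σ with hP
  have hPu : Pᴴ * P = 1 := permMat_conj_mul σ
  set C : Matrix (Fin M) (Fin M) ℂ := X * Matrix.diagonal (fun m => (x m : ℂ)) * Xᴴ with hC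
  set D : Matrix (Fin M) (Fin M) ℂ :=
    X * (P * Matrix.diagonal (fun m => (y m : ℂ))) * Xᴴ with hD
  set V : Matrix (Fin M) (Fin M) ℂ := Xk * P * Xkᴴ with hV
  refine ⟨C, D, 1, V, ?_, ?_, ?_, ?_⟩
  · exact Matrix.mem_unitaryGroup_iff.mpr (by simp)
  · rw [Matrix.mem_unitaryGroup_iff, Matrix.star_eq_conjTranspose, hV, sandwich_conjT,
      sandwich_mul hXku, permMat_mul_conj]
    simpa using hXku'
  · have hCC : Cᴴ * C = X * Matrix.diagonal (fun m => (x m : ℂ) * (x m : ℂ)) * Xᴴ := by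
      rw [hC, sandwich_conjT, sandwich_mul hXu, Matrix.diagonal_conjTranspose,
        Matrix.diagonal_mul_diagonal]
      congr 1
      congr 1
      funext m
      simp [Complex.conj_ofReal]
    have hDD : Dᴴ * D = X * Matrix.diagonal (fun m => (y m : ℂ) * (y m : ℂ)) * Xᴴ := by
      rw [hD, sandwich_conjT, sandwich_mul hXu]
      congr 1
      congr 1
      rw [Matrix.conjTranspose_mul, Matrix.diagonal_conjTranspose, Matrix.mul_assoc,
        cancel_left hPu, Matrix.diagonal_mul_diagonal]
      congr 1
      funext m
      simp [Complex.conj_ofReal]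
    rw [hCC, hDD, ← Matrix.add_mul, ← Matrix.mul_add]
    have hone : ((Matrix.diagonal fun m => (x m : ℂ) * (x m : ℂ)) +
        Matrix.diagonal fun m => (y m : ℂ) * (y m : ℂ)) = (1 : Matrix (Fin M) (Fin M) ℂ) := by
      ext i j
      by_cases h : i = j
      · subst h
        simp only [Matrix.add_apply, Matrix.diagonal_apply_eq, Matrix.one_apply_eq,
          ← Complex.ofReal_mul, ← Complex.ofReal_add, key3 i]
        norm_num
      · simp [Matrix.diagonal_apply_ne _ h, Matrix.one_apply_ne h]
    rw [hone, Matrix.mul_one, hXu']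
  · -- the action on the state
    have hCv : ∀ m, C.mulVec (χ m) = fun i => (x m : ℂ) * χ m i := by
      intro m
      rw [hC, ← Matrix.mulVec_mulVec, ← Matrix.mulVec_mulVec, hX, basMat_conj_mulVec hχ,
        diagonal_mulVec_ite, basMat_mulVec_ite]
      funext i
      ring
    have hDv : ∀ m, D.mulVec (χ m) = fun i => (y m : ℂ) * χ (σ m) i := by
      intro m
      rw [hD, ← Matrix.mulVec_mulVec, ← Matrix.mulVec_mulVec, ← Matrix.mulVec_mulVec, hX,
        basMat_conj_mulVec hχ, diagonal_mulVec_ite, hP, permMat_mulVec_ite, basMat_mulVec_ite]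
      funext i
      ring
    have hVv : ∀ m, V.mulVec (κ m) = κ (σ m) := by
      intro m
      rw [hV, ← Matrix.mulVec_mulVec, ← Matrix.mulVec_mulVec, hXk, basMat_conj_mulVec hκ,
        hP, permMat_mulVec_ite, basMat_mulVec_ite]
      funext i
      ring
    have hB1 : (C ⊗ₖ (1 : Matrix (Fin M) (Fin M) ℂ)).mulVec
        (∑ m, (Real.sqrt (r m) : ℂ) • tensorVec (χ m) (κ m)) =
        ((Real.sqrt t : ℝ) : ℂ) • ∑ m, (Real.sqrt (r' m) : ℂ) • tensorVec (χ m) (κ m) := by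
      rw [mulVec_sum, Finset.smul_sum]
      refine Finset.sum_congr rfl fun m _ => ?_
      rw [Matrix.mulVec_smul, kron_mulVec, Matrix.one_mulVec, hCv m, tensorVec_smul_left,
        smul_smul, smul_smul, ← Complex.ofReal_mul, ← Complex.ofReal_mul,
        mul_comm (Real.sqrt (r m)) (x m), key1 m]
    have hB2 : (D ⊗ₖ V).mulVec (∑ m, (Real.sqrt (r m) : ℂ) • tensorVec (χ m) (κ m)) =
        ((Real.sqrt (1 - t) : ℝ) : ℂ) •
          ∑ m, (Real.sqrt (r' m) : ℂ) • tensorVec (χ m) (κ m) := by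
      rw [mulVec_sum]
      have hterm : ∀ m, (D ⊗ₖ V).mulVec ((Real.sqrt (r m) : ℂ) • tensorVec (χ m) (κ m)) =
          ((Real.sqrt (1 - t) : ℝ) : ℂ) •
            ((Real.sqrt (r' (σ m)) : ℂ) • tensorVec (χ (σ m)) (κ (σ m))) := by
        intro m
        rw [Matrix.mulVec_smul, kron_mulVec, hDv m, hVv m, tensorVec_smul_left,
          smul_smul, smul_smul, ← Complex.ofReal_mul, ← Complex.ofReal_mul,
          mul_comm (Real.sqrt (r m)) (y m), key2 m]
      calc (∑ m, (D ⊗ₖ V).mulVec ((Real.sqrt (r m) : ℂ) • tensorVec (χ m) (κ m)))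
          = ∑ m, ((Real.sqrt (1 - t) : ℝ) : ℂ) •
              ((Real.sqrt (r' (σ m)) : ℂ) • tensorVec (χ (σ m)) (κ (σ m))) :=
            Finset.sum_congr rfl fun m _ => hterm m
        _ = ((Real.sqrt (1 - t) : ℝ) : ℂ) •
              ∑ m, (Real.sqrt (r' (σ m)) : ℂ) • tensorVec (χ (σ m)) (κ (σ m)) :=
            Finset.smul_sum.symm
        _ = _ := by
            rw [Equiv.sum_comp σ (fun m => (Real.sqrt (r' m) : ℂ) • tensorVec (χ m) (κ m))]
    rw [projVec_conj, projVec_conj, hB1, hB2, projVec_smul, projVec_smul]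
    have hst : star ((Real.sqrt t : ℝ) : ℂ) = ((Real.sqrt t : ℝ) : ℂ) := by
      simp [Complex.star_def, Complex.conj_ofReal]
    have hst' : star ((Real.sqrt (1 - t) : ℝ) : ℂ) = ((Real.sqrt (1 - t) : ℝ) : ℂ) := by
      simp [Complex.star_def, Complex.conj_ofReal]
    rw [hst, hst', ← Complex.ofReal_mul, ← Complex.ofReal_mul,
      Real.mul_self_sqrt ht0, Real.mul_self_sqrt ht1', ← add_smul, ← Complex.ofReal_add]
    norm_num

end NielsenAux
namespace NielsenAux
open Matrix

variable {M : ℕ}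

/-- Prefix sums over the first `n` coordinates. -/
noncomputable def Spre (f : Fin M → ℝ) (n : ℕ) : ℝ :=
  ∑ i ∈ Finset.univ.filter (fun i : Fin M => (i : ℕ) < n), f i

lemma Spre_succ (f : Fin M → ℝ) (n : ℕ) (hn : n < M) :
    Spre f (n + 1) = Spre f n + f ⟨n, hn⟩ := by
  have hset : Finset.univ.filter (fun i : Fin M => (i : ℕ) < n + 1) =
      insert (⟨n, hn⟩ : Fin M) (Finset.univ.filter (fun i : Fin M => (i : ℕ) < n)) := by
    ext i
    simp only [Finset.mem_filter, Finset.mem_univ, true_and, Finset.mem_insert, Fin.ext_iff]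
    omega
  rw [Spre, hset, Finset.sum_insert (by simp), Spre]
  ring

lemma Spre_sub (f g : Fin M → ℝ) (n : ℕ) :
    Spre (fun i => f i - g i) n = Spre f n - Spre g n := by
  simp [Spre, Finset.sum_sub_distrib]

lemma Spre_congr_of_zero {f : Fin M → ℝ} {K1 K2 : ℕ} (h12 : K1 ≤ K2)
    (hf : ∀ i : Fin M, K1 ≤ (i : ℕ) → (i : ℕ) < K2 → f i = 0) :
    Spre f K2 = Spre f K1 := by
  refine (Finset.sum_subset ?_ ?_).symm
  · intro i hi
    simp only [Finset.mem_filter, Finset.mem_univ, true_and] at hi ⊢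
    omega
  · intro i hi hni
    simp only [Finset.mem_filter, Finset.mem_univ, true_and] at hi hni
    exact hf i (by omega) hi

/-- Number of coordinates where `p` and `q` differ. -/
noncomputable def diffCard (p q : Fin M → ℝ) : ℕ := (Finset.univ.filter fun m => p m ≠ q m).card

/-- One T-transform step: if `q ≻ p` and `p ≠ q`, there is `q'` strictly closer to `p`
(in number of differing coordinates) with `q ≻ q' ≻ p`, obtained by Robin-Hooding mass
between two coordinates of `q`. -/
lemma tstep (p q : Fin M → ℝ) (hp0 : ∀ m, 0 ≤ p m) (hq0 : ∀ m, 0 ≤ q m)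
    (hpmono : Antitone p) (hqmono : Antitone q)
    (hp1 : ∑ m, p m = 1) (hq1 : ∑ m, q m = 1)
    (hmaj : MajorizesDesc q p) (hne : p ≠ q) :
    ∃ (q' : Fin M → ℝ) (j k : Fin M) (t : ℝ),
      (∀ m, 0 ≤ q' m) ∧ Antitone q' ∧ (∑ m, q' m = 1) ∧ MajorizesDesc q' p ∧
      diffCard p q' < diffCard p q ∧ 2 ≤ diffCard p q ∧
      j ≠ k ∧ 0 < q' j ∧ 0 < q' k ∧ 0 ≤ t ∧ t ≤ 1 ∧
      t * q j + (1 - t) * q k = q' j ∧ t * q k + (1 - t) * q j = q' k ∧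
      (∀ m, m ≠ j → m ≠ k → q m = q' m) := by
  classical
  -- the donor index j
  set S : Finset (Fin M) := Finset.univ.filter (fun i => p i < q i) with hS
  have hSne : S.Nonempty := by
    by_contra h
    rw [Finset.not_nonempty_iff_eq_empty] at h
    have hle : ∀ i : Fin M, q i ≤ p i := by
      intro i
      by_contra hi
      have : i ∈ S := by simp [hS, lt_of_not_ge hi]
      simp [h] at this
    obtain ⟨i0, hi0⟩ := Function.ne_iff.mp hne
    have hlt : q i0 < p i0 := lt_of_le_of_ne (hle i0) (Ne.symm hi0)
    have : ∑ m, q m < ∑ m, p m :=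
      Finset.sum_lt_sum (fun i _ => hle i) ⟨i0, Finset.mem_univ _, hlt⟩
    rw [hp1, hq1] at this
    exact lt_irrefl _ this
  set j : Fin M := S.max' hSne with hjdef
  have hj : p j < q j := by
    have := S.max'_mem hSne
    simp only [hS, Finset.mem_filter] at this
    exact this.2
  have hjmax : ∀ i : Fin M, p i < q i → i ≤ j := by
    intro i hi
    exact S.le_max' i (by simp [hS, hi])
  -- the recipient index k
  set T : Finset (Fin M) := Finset.univ.filter (fun i => j < i ∧ q i < p i) with hT
  have hTne : T.Nonempty := by
    by_contra h
    rw [Finset.not_nonempty_iff_eq_empty] at h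
    have heq : ∀ i : Fin M, j < i → p i = q i := by
      intro i hi
      have h1 : ¬ p i < q i := fun hc => absurd (hjmax i hc) (not_le.mpr hi)
      have h2 : ¬ q i < p i := by
        intro hc
        have : i ∈ T := by simp [hT, hi, hc]
        simp [h] at this
      linarith [lt_or_ge (p i) (q i)]
    set f : Fin M → ℝ := fun i => q i - p i with hf
    have htot : ∑ i, f i = 0 := by
      simp only [hf, Finset.sum_sub_distrib, hp1, hq1]
      ring
    have hsplit := Finset.sum_filter_add_sum_filter_not Finset.univ
      (fun i : Fin M => (i : ℕ) < (j : ℕ) + 1) f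
    have hrest : ∑ i ∈ Finset.univ.filter (fun i : Fin M => ¬ (i : ℕ) < (j : ℕ) + 1), f i
        = 0 := by
      apply Finset.sum_eq_zero
      intro i hi
      simp only [Finset.mem_filter, Finset.mem_univ, true_and, not_lt] at hi
      have : j < i := by rw [Fin.lt_def]; omega
      simp [hf, heq i this]
    have hSj : Spre f ((j : ℕ) + 1) = Spre f (j : ℕ) + f j :=
      Spre_succ f (j : ℕ) j.isLt
    have hSpos : 0 ≤ Spre f (j : ℕ) := by
      have h' : Spre p (j : ℕ) ≤ Spre q (j : ℕ) := hmaj (j : ℕ) (le_of_lt j.isLt)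
      have hsub : Spre f (j : ℕ) = Spre q (j : ℕ) - Spre p (j : ℕ) := by
        rw [hf]; exact Spre_sub q p (j : ℕ)
      linarith
    have hfj : 0 < f j := by simp [hf]; linarith
    have : (0 : ℝ) < ∑ i, f i := by
      rw [← hsplit]
      have h1 : 0 < Spre f ((j : ℕ) + 1) := by rw [hSj]; linarith
      have h2 : ∑ i ∈ Finset.univ.filter (fun i : Fin M => (i : ℕ) < (j : ℕ) + 1), f i
          = Spre f ((j : ℕ) + 1) := rfl
      linarith [hrest, h1, h2]
    rw [htot] at this
    exact lt_irrefl _ this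
  set k : Fin M := T.min' hTne with hkdef
  have hkmem := T.min'_mem hTne
  have hjk : j < k := by
    have h := hkmem
    simp only [hT, Finset.mem_filter, Finset.mem_univ, true_and] at h
    exact h.1
  have hk : q k < p k := by
    have h := hkmem
    simp only [hT, Finset.mem_filter, Finset.mem_univ, true_and] at h
    exact h.2
  have hkmin : ∀ i : Fin M, j < i → q i < p i → k ≤ i := by
    intro i h1 h2
    exact T.min'_le i (by simp [hT, h1, h2])
  have hmid : ∀ i : Fin M, j < i → i < k → p i = q i := by
    intro i h1 h2
    have hn1 : ¬ p i < q i := fun hc => absurd (hjmax i hc) (not_le.mpr h1)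
    have hn2 : ¬ q i < p i := fun hc => absurd (hkmin i h1 hc) (not_le.mpr h2)
    linarith [lt_or_ge (p i) (q i)]
  have hjk' : j ≠ k := ne_of_lt hjk
  set δ : ℝ := min (q j - p j) (p k - q k) with hδdef
  have hδ : 0 < δ := lt_min (by linarith) (by linarith)
  have hδ1 : δ ≤ q j - p j := min_le_left _ _
  have hδ2 : δ ≤ p k - q k := min_le_right _ _
  set q' : Fin M → ℝ := fun i => if i = j then q j - δ else if i = k then q k + δ else q i
    with hq'def
  have hq'j : q' j = q j - δ := by simp [hq'def]
  have hq'k : q' k = q k + δ := by simp [hq'def, hjk'.symm]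
  have hq'o : ∀ i, i ≠ j → i ≠ k → q' i = q i := by
    intro i h1 h2; simp [hq'def, h1, h2]
  have hpj_le : p j ≤ q' j := by rw [hq'j]; linarith
  have hq'k_le : q' k ≤ p k := by rw [hq'k]; linarith
  have hpkj : p k ≤ p j := hpmono hjk.le
  have hq'kj : q' k ≤ q' j := by linarith
  -- nonnegativity
  have hq'0 : ∀ m, 0 ≤ q' m := by
    intro m
    by_cases h1 : m = j
    · subst h1; linarith [hp0 j]
    by_cases h2 : m = k
    · subst h2; rw [hq'k]; linarith [hq0 k]
    · rw [hq'o m h1 h2]; exact hq0 m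
  -- monotonicity
  have hq'mono : Antitone q' := by
    intro i i' hii
    rcases eq_or_lt_of_le hii with rfl | hlt
    · exact le_refl _
    by_cases hij : i = j
    · subst hij
      have hi'j : i' ≠ j := (ne_of_gt hlt)
      by_cases hik' : i' = k
      · subst hik'; exact hq'kj
      rcases lt_or_gt_of_ne hik' with h | h
      · have hmidi := hmid i' hlt h
        rw [hq'o i' hi'j hik']
        calc q i' = p i' := hmidi.symm
          _ ≤ p j := hpmono hlt.le
          _ ≤ q' j := hpj_le
      · rw [hq'o i' hi'j hik']
        calc q i' ≤ q k := hqmono h.le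
          _ ≤ q' k := by rw [hq'k]; linarith
          _ ≤ q' j := hq'kj
    by_cases hik : i = k
    · subst hik
      have hi'k : i' ≠ k := (ne_of_gt hlt)
      have hi'j : i' ≠ j := ne_of_gt (lt_trans hjk hlt)
      rw [hq'o i' hi'j hi'k, hq'k]
      calc q i' ≤ q k := hqmono hlt.le
        _ ≤ q k + δ := by linarith
    -- i ∉ {j, k}
    by_cases hij' : i' = j
    · subst hij'
      rw [hq'o i hij hik, hq'j]
      calc q j - δ ≤ q j := by linarith
        _ ≤ q i := hqmono hlt.le
    by_cases hik' : i' = k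
    · subst hik'
      rw [hq'o i hij hik]
      rcases lt_or_gt_of_ne hij with h | h
      · calc q' k ≤ q' j := hq'kj
          _ ≤ q j := by rw [hq'j]; linarith
          _ ≤ q i := hqmono h.le
      · have := hmid i h hlt
        calc q' k ≤ p k := hq'k_le
          _ ≤ p i := hpmono hlt.le
          _ = q i := hmid i h hlt
    · rw [hq'o i hij hik, hq'o i' hij' hik']
      exact hqmono hlt.le
  -- sum
  have hdiffpt : ∀ i, q' i - q i =
      (if i = j then -δ else 0) + (if i = k then δ else 0) := by
    intro i
    by_cases h1 : i = j
    · subst h1; simp [hq'j, hjk']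
    by_cases h2 : i = k
    · subst h2; simp [hq'k, h1]
    · simp [hq'o i h1 h2, h1, h2]
  have hq'1 : ∑ m, q' m = 1 := by
    have h0 : ∑ i, (q' i - q i) = 0 := by
      rw [Finset.sum_congr rfl (fun i _ => hdiffpt i), Finset.sum_add_distrib,
        Finset.sum_ite_eq' Finset.univ j (fun _ => -δ),
        Finset.sum_ite_eq' Finset.univ k (fun _ => δ)]
      simp
    rw [Finset.sum_sub_distrib, hq1] at h0
    linarith
  -- majorization of p by q'
  have hSq' : ∀ K : ℕ, Spre q' K = Spre q K +
      ((if (j : ℕ) < K then -δ else 0) + (if (k : ℕ) < K then δ else 0)) := by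
    intro K
    have h1 : Spre q' K - Spre q K = ∑ i ∈ Finset.univ.filter (fun i : Fin M => (i : ℕ) < K),
        ((if i = j then -δ else 0) + (if i = k then δ else 0)) := by
      rw [← Spre_sub]
      exact Finset.sum_congr rfl (fun i _ => hdiffpt i)
    rw [Finset.sum_add_distrib, Finset.sum_ite_eq' _ j (fun _ => -δ),
      Finset.sum_ite_eq' _ k (fun _ => δ)] at h1
    simp only [Finset.mem_filter, Finset.mem_univ, true_and] at h1
    linarith
  have hmaj' : MajorizesDesc q' p := by
    intro K hK
    have hgoal : Spre p K ≤ Spre q' K := by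
      rw [hSq' K]
      by_cases hjK : (j : ℕ) < K
      · by_cases hkK : (k : ℕ) < K
        · simp only [if_pos hjK, if_pos hkK]
          have h' : Spre p K ≤ Spre q K := hmaj K hK
          linarith
        · simp only [if_pos hjK, if_neg hkK]
          -- need δ ≤ Spre (q-p) K
          set f : Fin M → ℝ := fun i => q i - p i with hf
          have hKj1 : (j : ℕ) + 1 ≤ K := hjK
          have hcongr : Spre f K = Spre f ((j : ℕ) + 1) := by
            apply Spre_congr_of_zero hKj1
            intro i hi1 hi2
            have hji : j < i := by rw [Fin.lt_def]; omega
            have hik : i < k := by rw [Fin.lt_def]; push_neg at hkK; omega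
            simp [hf, (hmid i hji hik).symm]
          have hSj : Spre f ((j : ℕ) + 1) = Spre f (j : ℕ) + f j :=
            Spre_succ f (j : ℕ) j.isLt
          have hSpos : 0 ≤ Spre f (j : ℕ) := by
            have h' : Spre p (j : ℕ) ≤ Spre q (j : ℕ) := hmaj (j : ℕ) (le_of_lt j.isLt)
            have hsub : Spre f (j : ℕ) = Spre q (j : ℕ) - Spre p (j : ℕ) := by
              rw [hf]; exact Spre_sub q p (j : ℕ)
            linarith
          have hfj : δ ≤ f j := by simp only [hf]; linarith
          have hd : δ ≤ Spre f K := by rw [hcongr, hSj]; linarith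
          have hsub : Spre f K = Spre q K - Spre p K := by
            rw [hf]; exact Spre_sub q p K
          linarith
      · have hkK : ¬ (k : ℕ) < K := fun hc => hjK (lt_trans (Fin.lt_def.mp hjk) hc)
        simp only [if_neg hjK, if_neg hkK]
        have h' : Spre p K ≤ Spre q K := hmaj K hK
        linarith
    exact hgoal
  -- differing-coordinate counts
  have hjd : j ∈ Finset.univ.filter (fun m => p m ≠ q m) := by
    simp [ne_of_lt hj]
  have hkd : k ∈ Finset.univ.filter (fun m => p m ≠ q m) := by
    simp [ne_of_gt hk]
  have h2 : 2 ≤ diffCard p q := Finset.one_lt_card.mpr ⟨j, hjd, k, hkd, hjk'⟩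
  have hdec : diffCard p q' < diffCard p q := by
    rcases min_cases (q j - p j) (p k - q k) with ⟨hmin, _⟩ | ⟨hmin, _⟩
    · have hq'jp : q' j = p j := by rw [hq'j, hδdef, hmin]; ring
      have hsub : (Finset.univ.filter fun m => p m ≠ q' m) ⊆
          (Finset.univ.filter fun m => p m ≠ q m).erase j := by
        intro i hi
        simp only [Finset.mem_filter, Finset.mem_univ, true_and] at hi
        rw [Finset.mem_erase]
        constructor
        · intro hij
          subst hij
          exact hi hq'jp.symm
        · simp only [Finset.mem_filter, Finset.mem_univ, true_and]
          by_cases h1 : i = j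
          · subst h1; exact ne_of_lt hj
          by_cases h2' : i = k
          · subst h2'; exact ne_of_gt hk
          · rw [hq'o i h1 h2'] at hi; exact hi
      exact lt_of_le_of_lt (Finset.card_le_card hsub) (Finset.card_erase_lt_of_mem hjd)
    · have hq'kp : q' k = p k := by rw [hq'k, hδdef, hmin]; ring
      have hsub : (Finset.univ.filter fun m => p m ≠ q' m) ⊆
          (Finset.univ.filter fun m => p m ≠ q m).erase k := by
        intro i hi
        simp only [Finset.mem_filter, Finset.mem_univ, true_and] at hi
        rw [Finset.mem_erase]
        constructor
        · intro hik
          subst hik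
          exact hi hq'kp.symm
        · simp only [Finset.mem_filter, Finset.mem_univ, true_and]
          by_cases h1 : i = j
          · subst h1; exact ne_of_lt hj
          by_cases h2' : i = k
          · subst h2'; exact ne_of_gt hk
          · rw [hq'o i h1 h2'] at hi; exact hi
      exact lt_of_le_of_lt (Finset.card_le_card hsub) (Finset.card_erase_lt_of_mem hkd)
  -- the mixing parameter
  set t : ℝ := (q' j - q k) / (q j - q k) with htdef
  have hden : 0 < q j - q k := by linarith
  have hq'kgeq : q k ≤ q' k := by rw [hq'k]; linarith
  have hnum0 : 0 ≤ q' j - q k := by linarith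
  have ht0 : 0 ≤ t := div_nonneg hnum0 hden.le
  have ht1 : t ≤ 1 := (div_le_one hden).mpr (by rw [hq'j]; linarith)
  have hmul : t * (q j - q k) = q' j - q k := div_mul_cancel₀ _ hden.ne'
  have hsum2 : q' j + q' k = q j + q k := by rw [hq'j, hq'k]; ring
  have heqa : t * q j + (1 - t) * q k = q' j := by linear_combination hmul
  have heqb : t * q k + (1 - t) * q j = q' k := by
    linear_combination (-1 : ℝ) * hmul - hsum2
  have hq'kpos : 0 < q' k := by rw [hq'k]; linarith [hq0 k]
  have hq'jpos : 0 < q' j := lt_of_lt_of_le hq'kpos hq'kj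
  exact ⟨q', j, k, t, hq'0, hq'mono, hq'1, hmaj', hdec, h2, hjk', hq'jpos, hq'kpos, ht0, ht1,
    heqa, heqb, fun m h1 h2 => (hq'o m h1 h2).symm⟩
end NielsenAux
namespace NielsenAux
open Matrix Kronecker

variable {M : ℕ}

lemma chain (χ κ : Fin M → Fin M → ℂ) (hχ : OrthonormalFam χ) (hκ : OrthonormalFam κ)
    (p : Fin M → ℝ) (hp0 : ∀ m, 0 ≤ p m) (hpmono : Antitone p) (hp1 : ∑ m, p m = 1) :
    ∀ (n : ℕ) (q : Fin M → ℝ), (∀ m, 0 ≤ q m) → Antitone q → (∑ m, q m = 1) →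
      MajorizesDesc q p → diffCard p q ≤ n + 1 →
      ∃ N : ℕ, N ≤ n ∧
        ∃ Λs : Fin N → (Matrix (Fin M × Fin M) (Fin M × Fin M) ℂ →
            Matrix (Fin M × Fin M) (Fin M × Fin M) ℂ),
          (∀ k : Fin N, ∃ C D U V : Matrix (Fin M) (Fin M) ℂ,
            U ∈ Matrix.unitaryGroup (Fin M) ℂ ∧ V ∈ Matrix.unitaryGroup (Fin M) ℂ ∧
            Cᴴ * C + Dᴴ * D = 1 ∧
            ∀ ω, Λs k ω = (C ⊗ₖ U) * ω * (C ⊗ₖ U)ᴴ + (D ⊗ₖ V) * ω * (D ⊗ₖ V)ᴴ) ∧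
          composeFam N Λs (projVec (∑ m, (Real.sqrt (p m) : ℂ) • tensorVec (χ m) (κ m))) =
            projVec (∑ m, (Real.sqrt (q m) : ℂ) • tensorVec (χ m) (κ m)) := by
  intro n
  induction n with
  | zero =>
    intro q hq0 hqmono hq1 hmaj hd
    by_cases hpq : p = q
    · subst hpq
      exact ⟨0, le_refl 0, fun k => k.elim0, fun k => k.elim0, rfl⟩
    · obtain ⟨q', j, k, t, _, _, _, _, _, h2, _⟩ :=
        tstep p q hp0 hq0 hpmono hqmono hp1 hq1 hmaj hpq
      omega
  | succ n ih =>
    intro q hq0 hqmono hq1 hmaj hd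
    by_cases hpq : p = q
    · subst hpq
      exact ⟨0, Nat.zero_le _, fun k => k.elim0, fun k => k.elim0, rfl⟩
    obtain ⟨q', j, k, t, hq'0, hq'mono, hq'1, hmaj', hdec, h2, hjk, hq'j, hq'k, ht0, ht1,
      heqa, heqb, hoff⟩ := tstep p q hp0 hq0 hpmono hqmono hp1 hq1 hmaj hpq
    obtain ⟨C, D, U, V, hU, hV, hCD, hact⟩ :=
      step_exists χ κ hχ hκ q' q hq'0 hq0 j k hjk hq'j hq'k t ht0 ht1 heqa heqb hoff
    obtain ⟨N', hN', Λs', hform', hcomp'⟩ := ih q' hq'0 hq'mono hq'1 hmaj' (by omega)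
    set Λ0 : Matrix (Fin M × Fin M) (Fin M × Fin M) ℂ →
        Matrix (Fin M × Fin M) (Fin M × Fin M) ℂ :=
      fun ω => (C ⊗ₖ U) * ω * (C ⊗ₖ U)ᴴ + (D ⊗ₖ V) * ω * (D ⊗ₖ V)ᴴ with hΛ0
    refine ⟨N' + 1, by omega, Fin.cases Λ0 Λs', ?_, ?_⟩
    · intro kk
      refine Fin.cases ?_ ?_ kk
      · exact ⟨C, D, U, V, hU, hV, hCD, fun ω => by simp only [Fin.cases_zero]; rfl⟩
      · intro i
        obtain ⟨C', D', U', V', h1', h2', h3', h4'⟩ := hform' i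
        exact ⟨C', D', U', V', h1', h2', h3', fun ω => by simp only [Fin.cases_succ]; exact h4' ω⟩
    · have hs : (fun i : Fin N' =>
          (Fin.cases Λ0 Λs' : Fin (N' + 1) → _) i.succ) = Λs' :=
        funext fun i => by simp only [Fin.cases_succ]
      calc composeFam (N' + 1) (Fin.cases Λ0 Λs')
            (projVec (∑ m, (Real.sqrt (p m) : ℂ) • tensorVec (χ m) (κ m)))
          = Λ0 (composeFam N' (fun i => (Fin.cases Λ0 Λs' : Fin (N' + 1) → _) i.succ)
              (projVec (∑ m, (Real.sqrt (p m) : ℂ) • tensorVec (χ m) (κ m)))) := by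
            rfl
        _ = Λ0 (projVec (∑ m, (Real.sqrt (q' m) : ℂ) • tensorVec (χ m) (κ m))) := by
            rw [hs, hcomp']
        _ = projVec (∑ m, (Real.sqrt (q m) : ℂ) • tensorVec (χ m) (κ m)) := by
            rw [hΛ0]; exact hact

end NielsenAux


/-- The hard direction of Nielsen's theorem: if `q` majorizes `p` then `|Ψ⟩⟨Ψ|` is converted
into `|Φ⟩⟨Φ|` by a composition of `N < M` completely positive maps, each having two Kraus
operators of the local form `C⊗U`, `D⊗V` with `U, V` unitary and `CᴴC + DᴴD = 1`. -/
theorem nielsen_hard_direction (M : ℕ) (hM : 1 ≤ M) (χ κ : Fin M → Fin M → ℂ)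
    (hχ : OrthonormalFam χ) (hκ : OrthonormalFam κ)
    (p q : Fin M → ℝ) (hp0 : ∀ m, 0 ≤ p m) (hq0 : ∀ m, 0 ≤ q m)
    (hpmono : Antitone p) (hqmono : Antitone q)
    (hp1 : ∑ m, p m = 1) (hq1 : ∑ m, q m = 1)
    (hmaj : MajorizesDesc q p) :
    ∃ N : ℕ, N < M ∧
      ∃ Λs : Fin N → (Matrix (Fin M × Fin M) (Fin M × Fin M) ℂ →
          Matrix (Fin M × Fin M) (Fin M × Fin M) ℂ),
        (∀ k : Fin N, ∃ C D U V : Matrix (Fin M) (Fin M) ℂ,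
          U ∈ Matrix.unitaryGroup (Fin M) ℂ ∧ V ∈ Matrix.unitaryGroup (Fin M) ℂ ∧
          Cᴴ * C + Dᴴ * D = 1 ∧
          ∀ ω, Λs k ω = (C ⊗ₖ U) * ω * (C ⊗ₖ U)ᴴ + (D ⊗ₖ V) * ω * (D ⊗ₖ V)ᴴ) ∧
        composeFam N Λs (projVec (∑ m, (Real.sqrt (p m) : ℂ) • tensorVec (χ m) (κ m))) =
          projVec (∑ m, (Real.sqrt (q m) : ℂ) • tensorVec (χ m) (κ m)) := by
  have hdc : NielsenAux.diffCard p q ≤ (M - 1) + 1 := by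
    have h1 : NielsenAux.diffCard p q ≤ M := by
      have := Finset.card_filter_le (Finset.univ : Finset (Fin M)) (fun m => p m ≠ q m)
      simpa [NielsenAux.diffCard] using this
    omega
  obtain ⟨N, hN, hrest⟩ := NielsenAux.chain χ κ hχ hκ p hp0 hpmono hp1 (M - 1) q hq0 hqmono
    hq1 hmaj hdc
  exact ⟨N, by omega, hrest⟩
end
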